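/- arXiv:1005.2774 — 5 statements merged into one kernel-verified Lean document; each statement's English description precedes it below -/
import Mathlib

section
/- Let W be a positive integer-valued random variable with E W = 1/p for some 0 < p ≤ 1, let W^e be a random variable defined on the same probability space having the discrete equilibrium distribution with respect to W, and set D = W − W^e. Then dTV(L(W^e), Ge(p)) ≤ p · E|D|. -/
set_option maxHeartbeats 1000000

open MeasureTheory ProbabilityTheory Real

/-- `Ge(p){B}`: probability that a geometric random variable on `{1,2,...}`
with parameter `p` (mass `(1-p)^{k-1} p` at `k`) lies in `B ⊆ ℤ`. -/
noncomputable def geProb (p : ℝ) (B : Set ℤ) : ℝ :=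
  ∑' k : ℕ, B.indicator (fun _ => (1 - p) ^ k * p) ((k : ℤ) + 1)

/-- Total variation distance between the law of an integer-valued random
variable `W` (under `μ`) and the geometric distribution `Ge(p)` on `{1,2,...}`. -/
noncomputable def dTVGe {Ω : Type*} [MeasurableSpace Ω] (μ : Measure Ω)
    (W : Ω → ℤ) (p : ℝ) : ℝ :=
  ⨆ B : Set ℤ, |(μ {ω | W ω ∈ B}).toReal - geProb p B|

noncomputable def gB (B : Set ℤ) : ℤ → ℝ := B.indicator 1

lemma gB_nonneg (B : Set ℤ) (k : ℤ) : 0 ≤ gB B k := by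
  unfold gB Set.indicator; split <;> norm_num

lemma gB_le_one (B : Set ℤ) (k : ℤ) : gB B k ≤ 1 := by
  unfold gB Set.indicator; split <;> norm_num

lemma indicator_const_eq (B : Set ℤ) (a : ℝ) (x : ℤ) :
    B.indicator (fun _ => a) x = a * gB B x := by
  unfold gB Set.indicator; split <;> simp

section Stein
variable {p : ℝ}

lemma hr0 (hp1 : p ≤ 1) : 0 ≤ 1 - p := by linarith
lemma hr1 (hp0 : 0 < p) : 1 - p < 1 := by linarith

lemma summable_geom (hp0 : 0 < p) (hp1 : p ≤ 1) : Summable (fun n : ℕ => (1 - p) ^ n) :=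
  summable_geometric_of_lt_one (hr0 hp1) (hr1 hp0)

lemma tsum_geom (hp0 : 0 < p) (hp1 : p ≤ 1) : ∑' n : ℕ, (1 - p) ^ n = 1 / p := by
  rw [tsum_geometric_of_lt_one (hr0 hp1) (hr1 hp0)]
  norm_num

lemma summable_aux (hp0 : 0 < p) (hp1 : p ≤ 1) (u : ℤ → ℝ) (C : ℝ)
    (hu : ∀ j, |u j| ≤ C) (k : ℤ) :
    Summable (fun n : ℕ => (1 - p) ^ n * u (k + n)) := by
  apply Summable.of_abs
  have hg : Summable (fun n : ℕ => C * (1 - p) ^ n) := (summable_geom hp0 hp1).mul_left C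
  refine Summable.of_nonneg_of_le (fun n => abs_nonneg _) (fun n => ?_) hg
  rw [abs_mul, abs_pow, abs_of_nonneg (hr0 hp1), mul_comm]
  exact mul_le_mul_of_nonneg_right (hu _) (pow_nonneg (hr0 hp1) n)

lemma summable_h (hp0 : 0 < p) (hp1 : p ≤ 1) (B : Set ℤ) (k : ℤ) :
    Summable (fun n : ℕ => (1 - p) ^ n * (gB B (k + n) - geProb p B)) := by
  refine summable_aux hp0 hp1 (fun j => gB B j - geProb p B) (1 + |geProb p B|) (fun j => ?_) k
  have h1 : |gB B j| ≤ 1 := by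
    rw [abs_of_nonneg (gB_nonneg B j)]; exact gB_le_one B j
  calc |gB B j - geProb p B| ≤ |gB B j| + |geProb p B| := abs_sub _ _
  _ ≤ 1 + |geProb p B| := by linarith

lemma summable_g (hp0 : 0 < p) (hp1 : p ≤ 1) (B : Set ℤ) (k : ℤ) :
    Summable (fun n : ℕ => (1 - p) ^ n * gB B (k + n)) := by
  apply summable_aux hp0 hp1 _ 1
  intro j
  rw [abs_of_nonneg (gB_nonneg B j)]; exact gB_le_one B j

noncomputable def steinF (p : ℝ) (B : Set ℤ) (k : ℤ) : ℝ :=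
  -∑' n : ℕ, (1 - p) ^ n * (gB B (k + n) - geProb p B)

lemma stein_eq (hp0 : 0 < p) (hp1 : p ≤ 1) (B : Set ℤ) (k : ℤ) :
    (1 - p) * steinF p B (k + 1) - steinF p B k = gB B k - geProb p B := by
  unfold steinF
  have h1 : ∑' n : ℕ, (1 - p) ^ n * (gB B (k + n) - geProb p B)
      = (gB B k - geProb p B)
        + (1 - p) * ∑' n : ℕ, (1 - p) ^ n * (gB B ((k + 1) + n) - geProb p B) := by
    rw [Summable.tsum_eq_zero_add (summable_h hp0 hp1 B k)]
    congr 1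
    · push_cast; simp
    · rw [← tsum_mul_left]
      congr 1; ext n
      have h2 : (k : ℤ) + ((n : ℕ) + 1 : ℕ) = (k + 1) + n := by push_cast; ring
      rw [h2]; ring
  rw [h1]; ring

lemma geProb_eq (B : Set ℤ) (p : ℝ) :
    geProb p B = p * ∑' n : ℕ, (1 - p) ^ n * gB B (1 + n) := by
  unfold geProb
  rw [← tsum_mul_left]
  congr 1; ext k
  rw [indicator_const_eq]
  rw [show ((k : ℤ) + 1) = 1 + k by ring]
  ring

lemma tsum_sub_part (hp0 : 0 < p) (hp1 : p ≤ 1) (B : Set ℤ) (k : ℤ) :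
    ∑' n : ℕ, (1 - p) ^ n * (gB B (k + n) - geProb p B)
      = (∑' n : ℕ, (1 - p) ^ n * gB B (k + n)) - geProb p B * (1 / p) := by
  have hs1 := summable_g hp0 hp1 B k
  have hs2 : Summable (fun n : ℕ => (1 - p) ^ n * geProb p B) :=
    (summable_geom hp0 hp1).mul_right _
  have h3 : (fun n : ℕ => (1 - p) ^ n * (gB B (k + n) - geProb p B))
      = fun n : ℕ => (1 - p) ^ n * gB B (k + n) - (1 - p) ^ n * geProb p B := by
    ext n; ring
  rw [h3, Summable.tsum_sub hs1 hs2, tsum_mul_right, tsum_geom hp0 hp1]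
  ring

lemma steinF_one (hp0 : 0 < p) (hp1 : p ≤ 1) (B : Set ℤ) : steinF p B 1 = 0 := by
  unfold steinF
  rw [tsum_sub_part hp0 hp1 B 1]
  have h : ∑' n : ℕ, (1 - p) ^ n * gB B (1 + n) = geProb p B / p := by
    rw [geProb_eq B p]; field_simp
  rw [h]; field_simp; ring

lemma steinF_incr (hp0 : 0 < p) (hp1 : p ≤ 1) (B : Set ℤ) (k : ℤ) :
    steinF p B (k + 1) - steinF p B k
      = gB B k - p * ∑' n : ℕ, (1 - p) ^ n * gB B ((k + 1) + n) := by
  have h := stein_eq hp0 hp1 B k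
  have h2 : steinF p B (k + 1) - steinF p B k
      = p * steinF p B (k + 1) + (gB B k - geProb p B) := by linarith
  rw [h2]
  have h4 : steinF p B (k+1)
      = -((∑' n : ℕ, (1 - p) ^ n * gB B ((k+1) + n)) - geProb p B * (1 / p)) := by
    unfold steinF; rw [tsum_sub_part hp0 hp1 B (k+1)]
  rw [h4]
  have hp' : p * (geProb p B * (1 / p)) = geProb p B := by field_simp
  linear_combination hp'

lemma steinF_incr_abs (hp0 : 0 < p) (hp1 : p ≤ 1) (B : Set ℤ) (k : ℤ) :
    |steinF p B (k + 1) - steinF p B k| ≤ 1 := by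
  rw [steinF_incr hp0 hp1 B k]
  set S := ∑' n : ℕ, (1 - p) ^ n * gB B ((k + 1) + n) with hS
  have hS0 : 0 ≤ S := tsum_nonneg (fun n => mul_nonneg (pow_nonneg (hr0 hp1) n) (gB_nonneg _ _))
  have hS1 : S ≤ 1 / p := by
    rw [← tsum_geom hp0 hp1]
    apply Summable.tsum_le_tsum _ (summable_g hp0 hp1 B (k+1)) (summable_geom hp0 hp1)
    intro n
    calc (1 - p) ^ n * gB B ((k+1) + n) ≤ (1 - p) ^ n * 1 :=
      mul_le_mul_of_nonneg_left (gB_le_one _ _) (pow_nonneg (hr0 hp1) n)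
    _ = (1 - p) ^ n := mul_one _
  have h1 : p * S ≤ 1 := by
    calc p * S ≤ p * (1 / p) := mul_le_mul_of_nonneg_left hS1 hp0.le
    _ = 1 := by field_simp
  have h2 : 0 ≤ p * S := mul_nonneg hp0.le hS0
  have := gB_nonneg B k; have := gB_le_one B k
  rw [abs_le]; constructor <;> linarith

lemma steinF_lip (hp0 : 0 < p) (hp1 : p ≤ 1) (B : Set ℤ) (a b : ℤ) :
    |steinF p B a - steinF p B b| ≤ |(a : ℝ) - (b : ℝ)| := by
  have key : ∀ (n : ℕ) (c : ℤ), |steinF p B (c + n) - steinF p B c| ≤ n := by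
    intro n
    induction n with
    | zero => intro c; simp
    | succ m ih =>
      intro c
      have h1 : (c + (m + 1 : ℕ) : ℤ) = (c + m) + 1 := by push_cast; ring
      rw [h1]
      calc |steinF p B ((c + m) + 1) - steinF p B c|
          ≤ |steinF p B ((c + m) + 1) - steinF p B (c + m)|
            + |steinF p B (c + m) - steinF p B c| := abs_sub_le _ _ _
        _ ≤ 1 + m := add_le_add (steinF_incr_abs hp0 hp1 B _) (ih c)
        _ = (m + 1 : ℕ) := by push_cast; ring
  rcases le_total b a with hab | hab
  · have h1 : a = b + ((a - b).toNat : ℤ) := by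
      rw [Int.toNat_of_nonneg (by linarith)]; ring
    have h3 : ((a - b).toNat : ℤ) = a - b := Int.toNat_of_nonneg (by linarith)
    have h4 : (((a - b).toNat : ℕ) : ℝ) = (a : ℝ) - b := by exact_mod_cast h3
    calc |steinF p B a - steinF p B b|
        = |steinF p B (b + ((a - b).toNat : ℤ)) - steinF p B b| := by rw [← h1]
      _ ≤ ((a - b).toNat : ℝ) := key _ b
      _ = |(a : ℝ) - b| := by
          rw [h4, abs_of_nonneg (by push_cast; linarith : (0:ℝ) ≤ (a : ℝ) - b)]
  · have h1 : b = a + ((b - a).toNat : ℤ) := by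
      rw [Int.toNat_of_nonneg (by linarith)]; ring
    have h3 : ((b - a).toNat : ℤ) = b - a := Int.toNat_of_nonneg (by linarith)
    have h4 : (((b - a).toNat : ℕ) : ℝ) = (b : ℝ) - a := by exact_mod_cast h3
    rw [abs_sub_comm]
    calc |steinF p B b - steinF p B a|
        = |steinF p B (a + ((b - a).toNat : ℤ)) - steinF p B a| := by rw [← h1]
      _ ≤ ((b - a).toNat : ℝ) := key _ a
      _ = |(a : ℝ) - b| := by
          rw [h4, abs_sub_comm, abs_of_nonneg (by push_cast; linarith : (0:ℝ) ≤ (b : ℝ) - a)]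

end Stein
open scoped ENNReal NNReal

lemma tsum_ite_lt_enn (m : ℕ) : ∑' k : ℕ, (if k < m then (1:ℝ≥0∞) else 0) = m := by
  rw [tsum_eq_sum (s := Finset.range m) (by intro b hb; simp at hb; simp [hb])]
  rw [Finset.sum_congr rfl (fun x hx => if_pos (Finset.mem_range.mp hx))]
  simp

theorem geometric_approx_tv_equilibrium_positive
    {Ω : Type*} [MeasurableSpace Ω] (μ : Measure Ω) [IsProbabilityMeasure μ]
    (W We : Ω → ℤ) (hW : Measurable W) (hWe : Measurable We)
    (p : ℝ) (hp0 : 0 < p) (hp1 : p ≤ 1)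
    (hWpos : ∀ ω, 0 < W ω)
    (hmean : ∫ ω, (W ω : ℝ) ∂μ = 1 / p)
    (heq : ∀ k : ℤ, 1 ≤ k →
      (μ {ω | We ω = k}).toReal = (μ {ω | k ≤ W ω}).toReal / ∫ ω, (W ω : ℝ) ∂μ) :
    ENNReal.ofReal (dTVGe μ We p)
      ≤ ENNReal.ofReal p * ∫⁻ ω, ENNReal.ofReal |(W ω : ℝ) - We ω| ∂μ := by
  by_cases hfin : ∫⁻ ω, ENNReal.ofReal |(W ω : ℝ) - We ω| ∂μ = ⊤
  · rw [hfin, ENNReal.mul_top (ENNReal.ofReal_pos.mpr hp0).ne']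
    exact le_top
  have hp' : p ≠ 0 := hp0.ne'
  -- basic integrability
  have hWr : Measurable (fun ω => (W ω : ℝ)) := Measurable.of_discrete.comp hW
  have hWint : Integrable (fun ω => (W ω : ℝ)) μ := by
    by_contra h
    rw [integral_undef h] at hmean
    have : (0:ℝ) < 1/p := by positivity
    linarith
  have hDmeas : Measurable (fun ω => |(W ω : ℝ) - We ω|) :=
    (Measurable.of_discrete (f := fun q : ℤ × ℤ => |((q.1 : ℝ)) - (q.2 : ℝ)|)).comp
      (hW.prodMk hWe)
  have hDint : Integrable (fun ω => |(W ω : ℝ) - We ω|) μ := by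
    refine ⟨hDmeas.aestronglyMeasurable, ?_⟩
    rw [hasFiniteIntegral_iff_norm]
    have : ∀ ω, ‖|(W ω : ℝ) - We ω|‖ = |(W ω : ℝ) - We ω| := fun ω => by
      rw [Real.norm_eq_abs, abs_abs]
    simp only [this]
    exact Ne.lt_top hfin
  have hdiffmeas : Measurable (fun ω => (W ω : ℝ) - We ω) :=
    (Measurable.of_discrete (f := fun q : ℤ × ℤ => ((q.1 : ℝ)) - (q.2 : ℝ))).comp
      (hW.prodMk hWe)
  have hDint' : Integrable (fun ω => (W ω : ℝ) - We ω) μ :=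
    hDint.mono' hdiffmeas.aestronglyMeasurable
      (Filter.Eventually.of_forall fun ω => by rw [Real.norm_eq_abs])
  have hWeint : Integrable (fun ω => (We ω : ℝ)) μ := by
    have h := hWint.sub hDint'
    have he : (fun ω => (We ω : ℝ))
        = (fun ω => (W ω : ℝ)) - (fun ω => (W ω : ℝ) - We ω) := by
      ext ω; simp
    rw [he]; exact h
  -- layer cake
  have lc1 : ∀ ω, ∑' k : ℕ, ({ω | (k:ℤ)+1 ≤ W ω}.indicator (1 : Ω → ℝ≥0∞) ω)
      = ENNReal.ofReal (W ω : ℝ) := by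
    intro ω
    have hm : (((W ω).toNat : ℤ)) = W ω := Int.toNat_of_nonneg (hWpos ω).le
    have h1 : ∀ k : ℕ, ({ω | (k:ℤ)+1 ≤ W ω}.indicator (1 : Ω → ℝ≥0∞) ω)
        = if k < (W ω).toNat then (1:ℝ≥0∞) else 0 := by
      intro k
      rw [Set.indicator_apply]
      congr 1
      simp only [Set.mem_setOf_eq, eq_iff_iff]
      omega
    rw [tsum_congr h1, tsum_ite_lt_enn]
    rw [show ((W ω : ℝ)) = (((W ω).toNat : ℕ) : ℝ) by exact_mod_cast hm.symm]
    simp [ENNReal.ofReal_natCast]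
  have hms : ∀ k : ℕ, MeasurableSet {ω | (k:ℤ)+1 ≤ W ω} := by
    intro k; exact hW (MeasurableSet.of_discrete : MeasurableSet {j : ℤ | (k:ℤ)+1 ≤ j})
  have lc2 : ∑' k : ℕ, μ {ω | (k:ℤ)+1 ≤ W ω} = ENNReal.ofReal (1/p) := by
    calc ∑' k : ℕ, μ {ω | (k:ℤ)+1 ≤ W ω}
        = ∑' k : ℕ, ∫⁻ ω, ({ω | (k:ℤ)+1 ≤ W ω}.indicator (1 : Ω → ℝ≥0∞) ω) ∂μ := by
          refine tsum_congr fun k => ?_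
          rw [lintegral_indicator_one (hms k)]
      _ = ∫⁻ ω, ∑' k : ℕ, ({ω | (k:ℤ)+1 ≤ W ω}.indicator (1 : Ω → ℝ≥0∞) ω) ∂μ := by
          rw [lintegral_tsum (fun k => ((measurable_one.indicator (hms k)).aemeasurable))]
      _ = ∫⁻ ω, ENNReal.ofReal (W ω : ℝ) ∂μ := lintegral_congr lc1
      _ = ENNReal.ofReal (∫ ω, (W ω : ℝ) ∂μ) := by
          rw [← ofReal_integral_eq_lintegral_ofReal hWint]
          exact Filter.Eventually.of_forall
            (fun ω => by show (0:ℝ) ≤ (W ω : ℝ); exact_mod_cast (hWpos ω).le)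
      _ = ENNReal.ofReal (1/p) := by rw [hmean]
  have heq' : ∀ k : ℕ, (μ {ω | We ω = (k:ℤ)+1}).toReal
      = p * (μ {ω | (k:ℤ)+1 ≤ W ω}).toReal := by
    intro k
    rw [heq ((k:ℤ)+1) (by omega), hmean]
    field_simp
  have hmsWe : ∀ k : ℤ, MeasurableSet {ω | We ω = k} := by
    intro k; exact hWe (MeasurableSet.of_discrete : MeasurableSet {j : ℤ | j = k})
  have hWeENN : ∀ k : ℕ, μ {ω | We ω = (k:ℤ)+1}
      = ENNReal.ofReal p * μ {ω | (k:ℤ)+1 ≤ W ω} := by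
    intro k
    rw [← ENNReal.ofReal_toReal (measure_ne_top μ {ω | We ω = (k:ℤ)+1}), heq' k,
      ENNReal.ofReal_mul hp0.le, ENNReal.ofReal_toReal (measure_ne_top μ _)]
  have hUnion : {ω | 1 ≤ We ω} = ⋃ k : ℕ, {ω | We ω = (k:ℤ)+1} := by
    ext ω
    simp only [Set.mem_setOf_eq, Set.mem_iUnion]
    constructor
    · intro h
      exact ⟨(We ω - 1).toNat, by omega⟩
    · rintro ⟨k, hk⟩; omega
  have hdisj : Pairwise (Function.onFun Disjoint (fun k : ℕ => {ω | We ω = (k:ℤ)+1})) := by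
    intro i j hij
    simp only [Function.onFun]
    apply Set.disjoint_left.mpr
    intro ω h1 h2
    simp only [Set.mem_setOf_eq] at h1 h2
    omega
  have hOne : μ {ω | 1 ≤ We ω} = 1 := by
    rw [hUnion, measure_iUnion hdisj (fun k => hmsWe _)]
    calc ∑' k : ℕ, μ {ω | We ω = (k:ℤ)+1}
        = ∑' k : ℕ, ENNReal.ofReal p * μ {ω | (k:ℤ)+1 ≤ W ω} := tsum_congr hWeENN
      _ = ENNReal.ofReal p * ∑' k : ℕ, μ {ω | (k:ℤ)+1 ≤ W ω} := ENNReal.tsum_mul_left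
      _ = ENNReal.ofReal p * ENNReal.ofReal (1/p) := by rw [lc2]
      _ = ENNReal.ofReal (p * (1/p)) := (ENNReal.ofReal_mul hp0.le).symm
      _ = 1 := by rw [mul_one_div_cancel hp', ENNReal.ofReal_one]
  have hae : ∀ᵐ ω ∂μ, 1 ≤ We ω := by
    have hms1 : MeasurableSet {ω | 1 ≤ We ω} :=
      hWe (MeasurableSet.of_discrete : MeasurableSet {j : ℤ | 1 ≤ j})
    rw [ae_iff]
    have h : {ω | ¬ 1 ≤ We ω} = {ω | 1 ≤ We ω}ᶜ := by ext ω; simp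
    rw [h, measure_compl hms1 (measure_ne_top μ _), hOne, measure_univ]
    simp
  have hWeSum : ∑' k : ℕ, μ {ω | We ω = (k:ℤ)+1} = 1 := by
    rw [← measure_iUnion hdisj (fun k => hmsWe _), ← hUnion, hOne]
  -- generic expansion of an integral of a sum of indicators
  have expand : ∀ (S : ℕ → Set Ω), (∀ k, MeasurableSet (S k)) → ∀ (v : ℕ → ℝ),
      (∀ k, |v k| ≤ 1) → (∑' k, μ (S k)) ≠ ⊤ →
      ∫ ω, (∑' k : ℕ, (S k).indicator (fun _ => v k) ω) ∂μ
        = ∑' k : ℕ, v k * (μ (S k)).toReal := by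
    intro S hS v hv hSsum
    have hmeas : ∀ k : ℕ, AEStronglyMeasurable ((S k).indicator (fun _ => v k)) μ :=
      fun k => (measurable_const.indicator (hS k)).aestronglyMeasurable
    have hlin : ∑' k : ℕ, ∫⁻ ω, ‖(S k).indicator (fun _ => v k) ω‖₊ ∂μ ≠ ⊤ := by
      have hle : ∀ k : ℕ, ∫⁻ ω, ‖(S k).indicator (fun _ => v k) ω‖₊ ∂μ ≤ μ (S k) := by
        intro k
        have hpt : ∀ ω, (‖(S k).indicator (fun _ => v k) ω‖₊ : ℝ≥0∞)
            ≤ (S k).indicator (1 : Ω → ℝ≥0∞) ω := by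
          intro ω
          by_cases h : ω ∈ S k
          · rw [Set.indicator_of_mem h, Set.indicator_of_mem h]
            rw [← enorm_eq_nnnorm, ← ofReal_norm]
            calc ENNReal.ofReal ‖v k‖
                ≤ ENNReal.ofReal 1 :=
                  ENNReal.ofReal_le_ofReal (by rw [Real.norm_eq_abs]; exact hv k)
              _ = 1 := ENNReal.ofReal_one
          · rw [Set.indicator_of_notMem h, Set.indicator_of_notMem h]; simp
        calc ∫⁻ ω, ‖(S k).indicator (fun _ => v k) ω‖₊ ∂μ
            ≤ ∫⁻ ω, (S k).indicator (1 : Ω → ℝ≥0∞) ω ∂μ := lintegral_mono hpt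
          _ = μ (S k) := lintegral_indicator_one (hS k)
      exact ((ENNReal.tsum_le_tsum hle).trans_lt (Ne.lt_top hSsum)).ne
    rw [integral_tsum hmeas hlin]
    exact tsum_congr fun k => by
      rw [integral_indicator_const (v k) (hS k), smul_eq_mul, mul_comm]; rfl
  -- expansion of E[g(We)]
  have keyA : ∀ g : ℤ → ℝ, (∀ k, |g k| ≤ 1) →
      ∫ ω, g (We ω) ∂μ
        = ∑' k : ℕ, g ((k:ℤ)+1) * (μ {ω | We ω = (k:ℤ)+1}).toReal := by
    intro g hg
    have hcong : ∫ ω, g (We ω) ∂μ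
        = ∫ ω, (∑' k : ℕ, ({ω | We ω = (k:ℤ)+1}).indicator (fun _ => g ((k:ℤ)+1)) ω) ∂μ := by
      apply integral_congr_ae
      filter_upwards [hae] with ω hω
      rw [tsum_eq_single (We ω - 1).toNat ?_]
      · rw [Set.indicator_of_mem (by show We ω = _; omega)]
        congr 1
        omega
      · intro b hb
        apply Set.indicator_of_notMem
        show ¬ We ω = (b:ℤ)+1
        omega
    rw [hcong, expand _ (fun k => hmsWe _) _ (fun k => hg _)
      (by rw [hWeSum]; exact ENNReal.one_ne_top)]
  -- telescoping identity
  have teleB : ∀ (f : ℤ → ℝ), f 1 = 0 → ∀ ω,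
      ∑' k : ℕ, ({ω | (k:ℤ)+1 ≤ W ω}).indicator
        (fun _ => f ((k:ℤ)+2) - f ((k:ℤ)+1)) ω = f (W ω + 1) := by
    intro f hf1 ω
    have hm : (((W ω).toNat : ℤ)) = W ω := Int.toNat_of_nonneg (hWpos ω).le
    set m := (W ω).toNat with hmdef
    have h1 : ∀ k : ℕ, ({ω | (k:ℤ)+1 ≤ W ω}).indicator
        (fun _ => f ((k:ℤ)+2) - f ((k:ℤ)+1)) ω
        = if k < m then ((fun i : ℕ => f ((i:ℤ)+1)) (k+1) - (fun i : ℕ => f ((i:ℤ)+1)) k) else 0 := by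
      intro k
      rw [Set.indicator_apply]
      by_cases h : ω ∈ {ω | (k:ℤ)+1 ≤ W ω}
      · rw [if_pos h, if_pos (by simp only [Set.mem_setOf_eq] at h; omega)]
        push_cast
        ring_nf
      · rw [if_neg h, if_neg (by simp only [Set.mem_setOf_eq] at h; omega)]
    rw [tsum_congr h1,
      tsum_eq_sum (s := Finset.range m) (by intro b hb; simp at hb; simp [hb]),
      Finset.sum_congr rfl (fun x hx => if_pos (Finset.mem_range.mp hx)),
      Finset.sum_range_sub (fun i : ℕ => f ((i:ℤ)+1))]
    simp only [Nat.cast_zero, zero_add, hf1, sub_zero]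
    rw [hm]
  -- equilibrium identity
  have eqC : ∀ f : ℤ → ℝ, f 1 = 0 → (∀ k : ℤ, |f (k+1) - f k| ≤ 1) →
      ∫ ω, (f (We ω + 1) - f (We ω)) ∂μ = p * ∫ ω, f (W ω + 1) ∂μ := by
    intro f hf1 hlip
    have h1 : ∫ ω, (f (We ω + 1) - f (We ω)) ∂μ
        = ∑' k : ℕ, (f ((k:ℤ)+2) - f ((k:ℤ)+1)) * (μ {ω | We ω = (k:ℤ)+1}).toReal := by
      have h := keyA (fun k => f (k+1) - f k) hlip
      rw [h]
      refine tsum_congr fun k => ?_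
      show (f ((k:ℤ)+1+1) - f ((k:ℤ)+1)) * _ = _
      rw [show (k:ℤ)+1+1 = (k:ℤ)+2 by ring]
    have hvb : ∀ k : ℕ, |f ((k:ℤ)+2) - f ((k:ℤ)+1)| ≤ 1 := by
      intro k
      have := hlip ((k:ℤ)+1)
      rwa [show (k:ℤ)+1+1 = (k:ℤ)+2 by ring] at this
    have h3 : ∑' k : ℕ, (f ((k:ℤ)+2) - f ((k:ℤ)+1)) * (μ {ω | (k:ℤ)+1 ≤ W ω}).toReal
        = ∫ ω, f (W ω + 1) ∂μ := by
      rw [← expand _ hms _ hvb (by rw [lc2]; exact ENNReal.ofReal_ne_top)]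
      exact integral_congr_ae (Filter.Eventually.of_forall fun ω => teleB f hf1 ω)
    rw [h1, ← h3, ← tsum_mul_left]
    exact tsum_congr fun k => by rw [heq' k]; ring
  -- fix B and apply Stein's method
  have perB : ∀ B : Set ℤ, |(μ {ω | We ω ∈ B}).toReal - geProb p B|
      ≤ p * ∫ ω, |(W ω : ℝ) - We ω| ∂μ := by
    intro B
    have hflip := steinF_lip hp0 hp1 B
    have hfone := steinF_one hp0 hp1 B
    have hfbound : ∀ k : ℤ, |steinF p B k| ≤ |(k:ℝ) - 1| := by
      intro k
      have := hflip k 1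
      simpa [hfone] using this
    have hint1 : Integrable (fun ω => steinF p B (We ω + 1)) μ := by
      refine Integrable.mono' hWeint.abs
        ((Measurable.of_discrete (f := fun k : ℤ => steinF p B (k+1))).comp
          hWe).aestronglyMeasurable ?_
      refine Filter.Eventually.of_forall fun ω => ?_
      rw [Real.norm_eq_abs]
      have := hfbound (We ω + 1)
      calc |steinF p B (We ω + 1)| ≤ |((We ω + 1 : ℤ):ℝ) - 1| := this
        _ = |(We ω : ℝ)| := by push_cast; ring_nf
    have hint3 : Integrable (fun ω => steinF p B (W ω + 1)) μ := by
      refine Integrable.mono' hWint.abs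
        ((Measurable.of_discrete (f := fun k : ℤ => steinF p B (k+1))).comp
          hW).aestronglyMeasurable ?_
      refine Filter.Eventually.of_forall fun ω => ?_
      rw [Real.norm_eq_abs]
      calc |steinF p B (W ω + 1)| ≤ |((W ω + 1 : ℤ):ℝ) - 1| := hfbound _
        _ = |(W ω : ℝ)| := by push_cast; ring_nf
    have hint2 : Integrable (fun ω => steinF p B (We ω + 1) - steinF p B (We ω)) μ := by
      refine Integrable.mono' (integrable_const (1:ℝ))
        ((Measurable.of_discrete (f := fun k : ℤ => steinF p B (k+1) - steinF p B k)).comp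
          hWe).aestronglyMeasurable ?_
      exact Filter.Eventually.of_forall fun ω => by
        rw [Real.norm_eq_abs]; exact steinF_incr_abs hp0 hp1 B (We ω)
    have hintgB : Integrable (fun ω => gB B (We ω)) μ := by
      refine Integrable.mono' (integrable_const (1:ℝ))
        ((Measurable.of_discrete (f := fun k : ℤ => gB B k)).comp
          hWe).aestronglyMeasurable ?_
      exact Filter.Eventually.of_forall fun ω => by
        rw [Real.norm_eq_abs, abs_of_nonneg (gB_nonneg B _)]
        exact gB_le_one B _
    -- Stein identity pointwise
    have hstein : ∀ ω, gB B (We ω) - geProb p B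
        = (steinF p B (We ω + 1) - steinF p B (We ω)) - p * steinF p B (We ω + 1) := by
      intro ω
      have := stein_eq hp0 hp1 B (We ω)
      linarith
    -- the main computation
    have hgBint : ∫ ω, gB B (We ω) ∂μ = (μ {ω | We ω ∈ B}).toReal := by
      have h : (fun ω => gB B (We ω))
          = fun ω => ({ω | We ω ∈ B}).indicator (fun _ => (1:ℝ)) ω := by
        ext ω
        unfold gB
        by_cases hb : We ω ∈ B
        · rw [Set.indicator_of_mem hb, Set.indicator_of_mem (by exact hb)]; rfl
        · rw [Set.indicator_of_notMem hb, Set.indicator_of_notMem (by exact hb)]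
      rw [h, integral_indicator_const (1:ℝ)
        (show MeasurableSet {ω | We ω ∈ B} from hWe MeasurableSet.of_discrete),
        smul_eq_mul, mul_one]; rfl
    have hchain : (μ {ω | We ω ∈ B}).toReal - geProb p B
        = p * ∫ ω, (steinF p B (W ω + 1) - steinF p B (We ω + 1)) ∂μ := by
      have e1 : ∫ ω, (gB B (We ω) - geProb p B) ∂μ
          = (μ {ω | We ω ∈ B}).toReal - geProb p B := by
        rw [integral_sub hintgB (integrable_const _), hgBint, integral_const,
          probReal_univ, one_smul]
      have e2 : ∫ ω, (gB B (We ω) - geProb p B) ∂μ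
          = ∫ ω, (steinF p B (We ω + 1) - steinF p B (We ω)) ∂μ
            - p * ∫ ω, steinF p B (We ω + 1) ∂μ := by
        rw [show (fun ω => gB B (We ω) - geProb p B)
            = fun ω => (steinF p B (We ω + 1) - steinF p B (We ω))
              - p * steinF p B (We ω + 1) from funext fun ω => hstein ω]
        rw [integral_sub hint2 (hint1.const_mul p), integral_const_mul]
      have e3 := eqC (steinF p B) hfone (fun k => steinF_incr_abs hp0 hp1 B k)
      rw [← e1, e2, e3, integral_sub hint3 hint1]
      ring
    rw [hchain, abs_mul, abs_of_nonneg hp0.le]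
    apply mul_le_mul_of_nonneg_left _ hp0.le
    calc |∫ ω, (steinF p B (W ω + 1) - steinF p B (We ω + 1)) ∂μ|
        ≤ ∫ ω, |steinF p B (W ω + 1) - steinF p B (We ω + 1)| ∂μ := by
          rw [← Real.norm_eq_abs]
          refine (norm_integral_le_integral_norm _).trans_eq ?_
          simp [Real.norm_eq_abs]
      _ ≤ ∫ ω, |(W ω : ℝ) - We ω| ∂μ := by
          apply integral_mono ((hint3.sub hint1).abs) hDint
          intro ω
          calc |steinF p B (W ω + 1) - steinF p B (We ω + 1)|
              ≤ |((W ω + 1 : ℤ) : ℝ) - ((We ω + 1 : ℤ) : ℝ)| := hflip _ _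
            _ = |(W ω : ℝ) - We ω| := by push_cast; ring_nf
  -- assemble
  have hintabs : (0:ℝ) ≤ ∫ ω, |(W ω : ℝ) - We ω| ∂μ :=
    integral_nonneg fun ω => abs_nonneg _
  have hsup : dTVGe μ We p ≤ p * ∫ ω, |(W ω : ℝ) - We ω| ∂μ := by
    apply Real.iSup_le (fun B => perB B)
    exact mul_nonneg hp0.le hintabs
  calc ENNReal.ofReal (dTVGe μ We p)
      ≤ ENNReal.ofReal (p * ∫ ω, |(W ω : ℝ) - We ω| ∂μ) := ENNReal.ofReal_le_ofReal hsup
    _ = ENNReal.ofReal p * ENNReal.ofReal (∫ ω, |(W ω : ℝ) - We ω| ∂μ) :=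
        ENNReal.ofReal_mul hp0.le
    _ = ENNReal.ofReal p * ∫⁻ ω, ENNReal.ofReal |(W ω : ℝ) - We ω| ∂μ := by
        rw [ofReal_integral_eq_lintegral_ofReal hDint
          (Filter.Eventually.of_forall fun ω => abs_nonneg _)]
end

section
/- Let W be a non-negative integer-valued random variable with P(W = 0) > 0 and E W = (1−p)/p for some 0 < p ≤ 1, let W^{e0} be a random variable defined on the same probability space having the discrete equilibrium distribution w.r.t. W, and set D = W − W^{e0}. Then dTV(L(W^{e0}), Ge⁰(p)) ≤ p · E|D|. -/
open MeasureTheory ProbabilityTheory Real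

/-- `Ge⁰(p){B}`: probability that a geometric random variable on `{0,1,2,...}`
with parameter `p` (mass `(1-p)^k p` at `k`) lies in `B ⊆ ℤ`. -/
noncomputable def ge0Prob (p : ℝ) (B : Set ℤ) : ℝ :=
  ∑' k : ℕ, B.indicator (fun _ => (1 - p) ^ k * p) (k : ℤ)

namespace GeomAux

/-- indicator of B as a real function -/
noncomputable def ind (B : Set ℤ) (k : ℤ) : ℝ := Set.indicator B (fun _ => 1) k

lemma ind_of_mem {B : Set ℤ} {k : ℤ} (h : k ∈ B) : ind B k = 1 := Set.indicator_of_mem h _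
lemma ind_of_not_mem {B : Set ℤ} {k : ℤ} (h : k ∉ B) : ind B k = 0 := Set.indicator_of_notMem h _

lemma ind_nonneg (B : Set ℤ) (k : ℤ) : 0 ≤ ind B k := by
  by_cases h : k ∈ B
  · rw [ind_of_mem h]; norm_num
  · rw [ind_of_not_mem h]

lemma ind_le_one (B : Set ℤ) (k : ℤ) : ind B k ≤ 1 := by
  by_cases h : k ∈ B
  · rw [ind_of_mem h]
  · rw [ind_of_not_mem h]; norm_num

lemma abs_ind_le_one (B : Set ℤ) (k : ℤ) : |ind B k| ≤ 1 := by
  rw [abs_of_nonneg (ind_nonneg B k)]; exact ind_le_one B k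

lemma q_nonneg (hp1 : p ≤ 1) : (0:ℝ) ≤ 1 - p := by linarith
lemma q_lt_one (hp0 : 0 < p) : (1:ℝ) - p < 1 := by linarith

section Basic

variable {p : ℝ} (hp0 : 0 < p) (hp1 : p ≤ 1)

include hp0 hp1 in
lemma summable_geom : Summable fun j : ℕ => (1 - p) ^ j :=
  summable_geometric_of_lt_one (q_nonneg hp1) (q_lt_one hp0)

include hp0 hp1 in
lemma tsum_geom : ∑' j : ℕ, (1 - p) ^ j = p⁻¹ := by
  rw [tsum_geometric_of_lt_one (q_nonneg hp1) (q_lt_one hp0)]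
  norm_num

include hp0 hp1 in
/-- summability of geometric-weighted bounded series -/
lemma summable_geom_mul (g : ℤ → ℝ) (C : ℝ) (hg : ∀ m, |g m| ≤ C) (k : ℤ) :
    Summable fun j : ℕ => (1 - p) ^ j * g (k + j) := by
  have hd : Summable (fun j : ℕ => (1 - p) ^ j * C) := (summable_geom hp0 hp1).mul_right C
  have habs : Summable (fun j : ℕ => |(1 - p) ^ j * g (k + j)|) := by
    refine Summable.of_nonneg_of_le (fun j => abs_nonneg _) ?_ hd
    intro j
    rw [abs_mul, abs_pow, abs_of_nonneg (q_nonneg hp1)]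
    exact mul_le_mul_of_nonneg_left (hg _) (pow_nonneg (q_nonneg hp1) j)
  exact summable_abs_iff.mp habs

lemma ge0Prob_eq (B : Set ℤ) : ge0Prob p B = (∑' j : ℕ, (1 - p) ^ j * ind B j) * p := by
  rw [ge0Prob, ← tsum_mul_right]
  congr 1; funext k
  by_cases h : (k:ℤ) ∈ B
  · rw [Set.indicator_of_mem h, ind_of_mem h]; ring
  · rw [Set.indicator_of_notMem h, ind_of_not_mem h]; ring

lemma ge0Prob_nonneg (hp0 : 0 < p) (hp1 : p ≤ 1) (B : Set ℤ) : 0 ≤ ge0Prob p B := by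
  apply tsum_nonneg
  intro k
  apply Set.indicator_nonneg
  intro _ _
  exact mul_nonneg (pow_nonneg (q_nonneg hp1) k) hp0.le

include hp0 hp1 in
lemma ge0Prob_le_one (B : Set ℤ) : ge0Prob p B ≤ 1 := by
  have hterm : ∀ k : ℕ, B.indicator (fun _ => (1 - p) ^ k * p) (k:ℤ) ≤ (1 - p) ^ k * p := by
    intro k
    apply Set.indicator_le_self'
    intro _ _
    exact mul_nonneg (pow_nonneg (q_nonneg hp1) k) hp0.le
  have hterm0 : ∀ k : ℕ, 0 ≤ B.indicator (fun _ => (1 - p) ^ k * p) (k:ℤ) := by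
    intro k
    apply Set.indicator_nonneg
    intro _ _
    exact mul_nonneg (pow_nonneg (q_nonneg hp1) k) hp0.le
  have hd : Summable (fun k : ℕ => (1 - p) ^ k * p) := (summable_geom hp0 hp1).mul_right p
  have hs : Summable (fun k : ℕ => B.indicator (fun _ => (1 - p) ^ k * p) (k:ℤ)) :=
    Summable.of_nonneg_of_le hterm0 hterm hd
  calc ge0Prob p B ≤ ∑' k : ℕ, (1 - p) ^ k * p := Summable.tsum_le_tsum hterm hs hd
    _ = 1 := by rw [tsum_mul_right, tsum_geom hp0 hp1, inv_mul_cancel₀ hp0.ne']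

end Basic

/-- Stein solution -/
noncomputable def sf (p : ℝ) (B : Set ℤ) (k : ℤ) : ℝ :=
  -∑' j : ℕ, (1 - p) ^ j * (ind B (k + j) - ge0Prob p B)

section SF

variable {p : ℝ} (hp0 : 0 < p) (hp1 : p ≤ 1) (B : Set ℤ)

include hp0 hp1

lemma abs_hB_le (k : ℤ) : |ind B k - ge0Prob p B| ≤ 1 := by
  rw [abs_le]
  constructor
  · have := ge0Prob_le_one hp0 hp1 B
    have := ind_nonneg B k
    linarith
  · have := ge0Prob_nonneg hp0 hp1 B
    have := ind_le_one B k
    linarith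

lemma summable_sf (k : ℤ) :
    Summable fun j : ℕ => (1 - p) ^ j * (ind B (k + j) - ge0Prob p B) :=
  summable_geom_mul hp0 hp1 _ 1 (abs_hB_le hp0 hp1 B) k

lemma summable_sf_ind (k : ℤ) :
    Summable fun j : ℕ => (1 - p) ^ j * ind B (k + j) :=
  summable_geom_mul hp0 hp1 _ 1 (abs_ind_le_one B) k

/-- general shift identity for geometric-weighted sums of bounded functions -/
lemma geom_shift (g : ℤ → ℝ) (C : ℝ) (hg : ∀ m, |g m| ≤ C) (k : ℤ) :
    ∑' j : ℕ, (1 - p) ^ j * g (k + j) =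
      g k + (1 - p) * ∑' j : ℕ, (1 - p) ^ j * g (k + 1 + j) := by
  rw [Summable.tsum_eq_zero_add (summable_geom_mul hp0 hp1 g C hg k)]
  simp only [pow_zero, one_mul, Nat.cast_zero, add_zero]
  congr 1
  rw [← tsum_mul_left]
  congr 1; funext j
  push_cast
  rw [pow_succ]
  ring_nf

lemma sf_stein (k : ℤ) :
    sf p B k = (1 - p) * sf p B (k + 1) - (ind B k - ge0Prob p B) := by
  rw [sf, sf, geom_shift hp0 hp1 (fun m => ind B m - ge0Prob p B) 1 (abs_hB_le hp0 hp1 B) k]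
  ring

lemma sf_zero : sf p B 0 = 0 := by
  rw [sf]
  have h1 : Summable fun j : ℕ => (1 - p) ^ j * ind B ((0:ℤ) + j) := summable_sf_ind hp0 hp1 B 0
  have h2 : Summable fun j : ℕ => (1 - p) ^ j * ge0Prob p B :=
    (summable_geom hp0 hp1).mul_right _
  have : (fun j : ℕ => (1 - p) ^ j * (ind B ((0:ℤ) + j) - ge0Prob p B)) =
      fun j : ℕ => (1 - p) ^ j * ind B ((0:ℤ) + j) - (1 - p) ^ j * ge0Prob p B := by
    funext j; ring
  rw [this, Summable.tsum_sub h1 h2, tsum_mul_right, tsum_geom hp0 hp1]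
  have h3 : ∑' j : ℕ, (1 - p) ^ j * ind B ((0:ℤ) + j) = ∑' j : ℕ, (1 - p) ^ j * ind B j := by
    congr 1; funext j; rw [zero_add]
  rw [h3]
  have h4 := ge0Prob_eq (p := p) B
  have : ∑' j : ℕ, (1 - p) ^ j * ind B j = ge0Prob p B * p⁻¹ := by
    rw [h4]; field_simp
  rw [this]
  ring

lemma abs_sf_le (k : ℤ) : |sf p B k| ≤ p⁻¹ := by
  rw [sf, abs_neg]
  calc |∑' j : ℕ, (1 - p) ^ j * (ind B (k + j) - ge0Prob p B)|
      ≤ ∑' j : ℕ, |(1 - p) ^ j * (ind B (k + j) - ge0Prob p B)| := by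
        have hs : Summable fun j : ℕ =>
            ‖(1 - p) ^ j * (ind B (k + j) - ge0Prob p B)‖ := by
          simp only [Real.norm_eq_abs]
          exact (summable_sf hp0 hp1 B k).abs
        have hn := norm_tsum_le_tsum_norm hs
        simp only [Real.norm_eq_abs] at hn
        exact hn
    _ ≤ ∑' j : ℕ, (1 - p) ^ j := by
        apply Summable.tsum_le_tsum _ ((summable_sf hp0 hp1 B k).abs) (summable_geom hp0 hp1)
        intro j
        rw [abs_mul, abs_pow, abs_of_nonneg (q_nonneg hp1)]
        calc (1-p)^j * |ind B (k + j) - ge0Prob p B| ≤ (1-p)^j * 1 :=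
              mul_le_mul_of_nonneg_left (abs_hB_le hp0 hp1 B _) (pow_nonneg (q_nonneg hp1) j)
          _ = (1-p)^j := mul_one _
    _ = p⁻¹ := tsum_geom hp0 hp1

lemma sf_diff (k : ℤ) :
    sf p B (k + 1) - sf p B k =
      ind B k - p * ∑' j : ℕ, (1 - p) ^ j * ind B (k + 1 + j) := by
  have hsub : ∀ m : ℤ, ∑' j : ℕ, (1 - p) ^ j * (ind B (m + j) - ge0Prob p B) =
      (∑' j : ℕ, (1 - p) ^ j * ind B (m + j)) - ge0Prob p B * p⁻¹ := by
    intro m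
    have h1 := summable_sf_ind hp0 hp1 B m
    have h2 : Summable fun j : ℕ => (1 - p) ^ j * ge0Prob p B :=
      (summable_geom hp0 hp1).mul_right _
    have he : (fun j : ℕ => (1 - p) ^ j * (ind B (m + j) - ge0Prob p B)) =
        fun j : ℕ => (1 - p) ^ j * ind B (m + j) - (1 - p) ^ j * ge0Prob p B := by
      funext j; ring
    rw [he, Summable.tsum_sub h1 h2, tsum_mul_right, tsum_geom hp0 hp1]
    ring
  rw [sf, sf, hsub, hsub]
  have hshift := geom_shift hp0 hp1 (ind B) 1 (abs_ind_le_one B) k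
  rw [hshift]
  ring

lemma abs_sf_diff_le (k : ℤ) : |sf p B (k + 1) - sf p B k| ≤ 1 := by
  rw [sf_diff hp0 hp1 B k, abs_le]
  have hS0 : 0 ≤ ∑' j : ℕ, (1 - p) ^ j * ind B (k + 1 + j) :=
    tsum_nonneg fun j => mul_nonneg (pow_nonneg (q_nonneg hp1) j) (ind_nonneg B _)
  have hS1 : ∑' j : ℕ, (1 - p) ^ j * ind B (k + 1 + j) ≤ p⁻¹ := by
    calc ∑' j : ℕ, (1 - p) ^ j * ind B (k + 1 + j) ≤ ∑' j : ℕ, (1 - p) ^ j := by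
          apply Summable.tsum_le_tsum _ (summable_sf_ind hp0 hp1 B _) (summable_geom hp0 hp1)
          intro j
          calc (1-p)^j * ind B (k+1+j) ≤ (1-p)^j * 1 :=
                mul_le_mul_of_nonneg_left (ind_le_one B _) (pow_nonneg (q_nonneg hp1) j)
            _ = (1-p)^j := mul_one _
      _ = p⁻¹ := tsum_geom hp0 hp1
  have hpS : p * ∑' j : ℕ, (1 - p) ^ j * ind B (k + 1 + j) ≤ 1 := by
    calc p * ∑' j : ℕ, (1 - p) ^ j * ind B (k + 1 + j) ≤ p * p⁻¹ :=
          mul_le_mul_of_nonneg_left hS1 hp0.le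
      _ = 1 := mul_inv_cancel₀ hp0.ne'
  have hpS0 : 0 ≤ p * ∑' j : ℕ, (1 - p) ^ j * ind B (k + 1 + j) := mul_nonneg hp0.le hS0
  constructor
  · have := ind_nonneg B k; linarith
  · have := ind_le_one B k; linarith

lemma abs_sf_sub_le (a b : ℤ) : |sf p B a - sf p B b| ≤ |(a:ℝ) - (b:ℝ)| := by
  have key : ∀ n : ℕ, ∀ k : ℤ, |sf p B (k + n) - sf p B k| ≤ n := by
    intro n
    induction n with
    | zero => intro k; simp
    | succ m ih =>
      intro k
      have h1 := ih (k + 1)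
      have h2 := abs_sf_diff_le hp0 hp1 B k
      have he : (k + 1 + (m:ℤ)) = k + ((m:ℕ)+1 : ℕ) := by push_cast; ring
      calc |sf p B (k + ((m:ℕ)+1 : ℕ)) - sf p B k|
          = |(sf p B (k + 1 + m) - sf p B (k+1)) + (sf p B (k+1) - sf p B k)| := by
            rw [← he]; ring_nf
        _ ≤ |sf p B (k + 1 + m) - sf p B (k+1)| + |sf p B (k+1) - sf p B k| := abs_add_le _ _
        _ ≤ (((m:ℕ)+1 : ℕ) : ℝ) := by push_cast; linarith
  rcases le_total b a with h | h
  · obtain ⟨n, hn⟩ : ∃ n : ℕ, a = b + n := ⟨(a - b).toNat, by omega⟩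
    subst hn
    have hc : |((b + (n:ℤ) : ℤ):ℝ) - (b:ℝ)| = n := by
      push_cast
      rw [add_sub_cancel_left]
      exact abs_of_nonneg (Nat.cast_nonneg n)
    rw [hc]
    exact key n b
  · obtain ⟨n, hn⟩ : ∃ n : ℕ, b = a + n := ⟨(b - a).toNat, by omega⟩
    subst hn
    have hc : |((a:ℝ)) - ((a + (n:ℤ) : ℤ):ℝ)| = n := by
      push_cast
      rw [abs_sub_comm, add_sub_cancel_left]
      exact abs_of_nonneg (Nat.cast_nonneg n)
    rw [hc, abs_sub_comm]
    exact key n a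

end SF

section MeasAux

variable {Ω : Type*} [MeasurableSpace Ω] (μ : Measure Ω) [IsProbabilityMeasure μ]

lemma tsum_int_of_neg_zero (a : ℤ → ℝ) (h : ∀ k : ℤ, k < 0 → a k = 0)
    (hs : Summable fun n : ℕ => a n) : ∑' k : ℤ, a k = ∑' n : ℕ, a n := by
  have hz : (fun n : ℕ => a (-(n+1))) = fun _ => 0 := by
    funext n
    exact h _ (by omega)
  rw [tsum_of_nat_of_neg_add_one hs (by rw [hz]; exact summable_zero), hz, tsum_zero, add_zero]

lemma pairwise_disjoint_fiber (X : Ω → ℤ) :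
    Pairwise (Function.onFun Disjoint fun k : ℤ => {ω | X ω = k}) := by
  intro i j hij
  rw [Function.onFun, Set.disjoint_left]
  intro ω h1 h2
  exact hij (by rw [← h1, ← h2])

lemma measurableSet_fiber (X : Ω → ℤ) (hX : Measurable X) (k : ℤ) :
    MeasurableSet {ω | X ω = k} := hX (measurableSet_singleton k)

lemma tsum_mass_eq_one (X : Ω → ℤ) (hX : Measurable X) :
    ∑' k : ℤ, μ {ω | X ω = k} = 1 := by
  rw [← measure_iUnion (pairwise_disjoint_fiber X) (measurableSet_fiber X hX)]
  have : (⋃ k : ℤ, {ω | X ω = k}) = Set.univ := by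
    ext ω
    simp only [Set.mem_iUnion, Set.mem_univ, iff_true, Set.mem_setOf_eq]
    exact ⟨X ω, rfl⟩
  rw [this, measure_univ]

lemma summable_mass (X : Ω → ℤ) (hX : Measurable X) :
    Summable fun k : ℤ => (μ {ω | X ω = k}).toReal := by
  apply ENNReal.summable_toReal
  rw [tsum_mass_eq_one μ X hX]
  exact ENNReal.one_ne_top

lemma summable_mass_nat (X : Ω → ℤ) (hX : Measurable X) :
    Summable fun k : ℕ => (μ {ω | X ω = k}).toReal := by
  exact (summable_mass μ X hX).comp_injective (fun a b h => Int.ofNat.inj h)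

lemma integrable_comp_bounded (X : Ω → ℤ) (hX : Measurable X) (g : ℤ → ℝ) (C : ℝ)
    (hg : ∀ k, |g k| ≤ C) : Integrable (fun ω => g (X ω)) μ := by
  apply Integrable.mono' (integrable_const C)
    ((measurable_of_countable g).comp hX).aestronglyMeasurable
  exact ae_of_all _ fun ω => by rw [Real.norm_eq_abs]; exact hg _

lemma integral_comp_eq_tsum (X : Ω → ℤ) (hX : Measurable X) (g : ℤ → ℝ) (C : ℝ)
    (hg : ∀ k, |g k| ≤ C) :
    ∫ ω, g (X ω) ∂μ = ∑' k : ℤ, (μ {ω | X ω = k}).toReal * g k := by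
  have hpm : IsProbabilityMeasure (μ.map X) := Measure.isProbabilityMeasure_map hX.aemeasurable
  have hint : Integrable g (μ.map X) := by
    apply Integrable.mono' (integrable_const C) (measurable_of_countable g).aestronglyMeasurable
    exact ae_of_all _ fun k => by rw [Real.norm_eq_abs]; exact hg _
  rw [← integral_map hX.aemeasurable (measurable_of_countable g).aestronglyMeasurable,
    integral_countable' hint]
  congr 1; funext k
  rw [measureReal_def, Measure.map_apply hX (measurableSet_singleton k), smul_eq_mul]
  rfl

lemma lintegral_comp_eq_tsum (X : Ω → ℤ) (hX : Measurable X) (g : ℤ → ENNReal) :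
    ∫⁻ ω, g (X ω) ∂μ = ∑' k : ℤ, g k * μ {ω | X ω = k} := by
  rw [← lintegral_map (measurable_of_countable g) hX, lintegral_countable']
  congr 1; funext k
  rw [Measure.map_apply hX (measurableSet_singleton k)]
  rfl

lemma tsum_int_of_neg_zero_ennreal (a : ℤ → ENNReal) (h : ∀ k : ℤ, k < 0 → a k = 0) :
    ∑' k : ℤ, a k = ∑' n : ℕ, a n := by
  rw [tsum_of_nat_of_neg_add_one ENNReal.summable ENNReal.summable]
  have hz : ∀ n : ℕ, a (-((n:ℤ)+1)) = 0 := fun n => h _ (by omega)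
  rw [tsum_congr hz, tsum_zero, add_zero]

lemma summable_mass_mul (c : ℕ → ℝ) (hc : Summable c) (hc0 : ∀ n, 0 ≤ c n)
    (g : ℕ → ℝ) (C : ℝ) (hg : ∀ n, |g n| ≤ C) : Summable fun n => c n * g n := by
  refine summable_abs_iff.mp (Summable.of_nonneg_of_le (fun n => abs_nonneg _) ?_ (hc.mul_right C))
  intro n
  rw [abs_mul, abs_of_nonneg (hc0 n)]
  exact mul_le_mul_of_nonneg_left (hg n) (hc0 n)

lemma tail_eq_tsum (W : Ω → ℤ) (hW : Measurable W) (hWnonneg : ∀ ω, 0 ≤ W ω) (k : ℕ) :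
    μ {ω | (k:ℤ) + 1 ≤ W ω} = ∑' j : ℕ, (if k < j then μ {ω | W ω = (j:ℤ)} else 0) := by
  classical
  set S : ℕ → Set Ω := fun j => if k < j then {ω | W ω = (j:ℤ)} else ∅ with hS
  have hU : {ω | (k:ℤ) + 1 ≤ W ω} = ⋃ j, S j := by
    ext ω
    simp only [Set.mem_setOf_eq, Set.mem_iUnion, hS]
    constructor
    · intro h
      refine ⟨(W ω).toNat, ?_⟩
      have h1 : k < (W ω).toNat := by omega
      rw [if_pos h1]
      simp only [Set.mem_setOf_eq]
      omega
    · rintro ⟨j, hj⟩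
      by_cases h1 : k < j
      · rw [if_pos h1] at hj
        simp only [Set.mem_setOf_eq] at hj
        omega
      · rw [if_neg h1] at hj
        exact absurd hj (Set.notMem_empty ω)
  have hdisj : Pairwise (Function.onFun Disjoint S) := by
    intro i j hij
    rw [Function.onFun, Set.disjoint_left]
    intro ω h1 h2
    simp only [hS] at h1 h2
    by_cases hi : k < i
    · by_cases hj : k < j
      · rw [if_pos hi] at h1
        rw [if_pos hj] at h2
        simp only [Set.mem_setOf_eq] at h1 h2
        exact hij (by omega)
      · rw [if_neg hj] at h2
        exact absurd h2 (Set.notMem_empty ω)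
    · rw [if_neg hi] at h1
      exact absurd h1 (Set.notMem_empty ω)
  have hmeas : ∀ j, MeasurableSet (S j) := by
    intro j
    simp only [hS]
    split
    · exact measurableSet_fiber W hW _
    · exact MeasurableSet.empty
  rw [hU, measure_iUnion hdisj hmeas]
  congr 1
  funext j
  simp only [hS]
  split
  · rfl
  · exact measure_empty

lemma tail_tsum_total (W : Ω → ℤ) (hW : Measurable W) (hWnonneg : ∀ ω, 0 ≤ W ω) :
    ∑' k : ℕ, μ {ω | (k:ℤ) + 1 ≤ W ω} = ∑' j : ℕ, (j : ENNReal) * μ {ω | W ω = (j:ℤ)} := by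
  classical
  calc ∑' k : ℕ, μ {ω | (k:ℤ) + 1 ≤ W ω}
      = ∑' (k : ℕ) (j : ℕ), (if k < j then μ {ω | W ω = (j:ℤ)} else 0) := by
        exact tsum_congr fun k => tail_eq_tsum μ W hW hWnonneg k
    _ = ∑' (j : ℕ) (k : ℕ), (if k < j then μ {ω | W ω = (j:ℤ)} else 0) := ENNReal.tsum_comm
    _ = ∑' j : ℕ, (j : ENNReal) * μ {ω | W ω = (j:ℤ)} := by
        refine tsum_congr fun j => ?_
        rw [tsum_eq_sum (s := Finset.range j) (fun k hk => by
          rw [if_neg (by simpa using hk)])]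
        rw [Finset.sum_congr rfl (fun k hk => if_pos (Finset.mem_range.mp hk)),
          Finset.sum_const, Finset.card_range, nsmul_eq_mul]

lemma mean_tsum (W : Ω → ℤ) (hW : Measurable W) (hWnonneg : ∀ ω, 0 ≤ W ω)
    (hWint : Integrable (fun ω => (W ω : ℝ)) μ) :
    ∑' j : ℕ, (j : ENNReal) * μ {ω | W ω = (j:ℤ)} = ENNReal.ofReal (∫ ω, (W ω : ℝ) ∂μ) := by
  rw [ofReal_integral_eq_lintegral_ofReal hWint
    (ae_of_all _ fun ω => by simp only [Pi.zero_apply]; exact_mod_cast hWnonneg ω)]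
  have h1 : ∫⁻ ω, ENNReal.ofReal ((W ω : ℝ)) ∂μ
      = ∑' k : ℤ, ENNReal.ofReal ((k : ℝ)) * μ {ω | W ω = k} :=
    lintegral_comp_eq_tsum μ W hW (fun k => ENNReal.ofReal ((k : ℝ)))
  rw [h1, tsum_int_of_neg_zero_ennreal _ (fun k hk => by
      rw [ENNReal.ofReal_eq_zero.mpr (by exact_mod_cast hk.le), zero_mul])]
  refine (tsum_congr fun j => ?_).symm
  congr 1
  rw [show (((j:ℤ) : ℝ)) = (j : ℝ) by push_cast; ring, ENNReal.ofReal_natCast]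

end MeasAux

section Key

variable {Ω : Type*} [MeasurableSpace Ω] (μ : Measure Ω) [IsProbabilityMeasure μ]

lemma key_bound (W We : Ω → ℤ) (hW : Measurable W) (hWe : Measurable We)
    (p : ℝ) (hp0 : 0 < p) (hp1' : p < 1)
    (hWnonneg : ∀ ω, 0 ≤ W ω)
    (hmean : ∫ ω, (W ω : ℝ) ∂μ = (1 - p) / p)
    (heq : ∀ k : ℤ, 0 ≤ k →
      (μ {ω | We ω = k}).toReal = (μ {ω | k + 1 ≤ W ω}).toReal / ∫ ω, (W ω : ℝ) ∂μ)
    (B : Set ℤ)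
    (hL : (∫⁻ ω, ENNReal.ofReal |(W ω : ℝ) - We ω| ∂μ) ≠ ⊤) :
    |(μ {ω | We ω ∈ B}).toReal - ge0Prob p B|
      ≤ p * (∫⁻ ω, ENNReal.ofReal |(W ω : ℝ) - We ω| ∂μ).toReal := by
  classical
  have hp1 : p ≤ 1 := hp1'.le
  set q : ℝ := 1 - p with hqdef
  set M : ℝ := (1 - p) / p with hMdef
  have hq0 : 0 < q := by simp only [hqdef]; linarith
  have hM0 : 0 < M := div_pos hq0 hp0
  have hWint : Integrable (fun ω => (W ω : ℝ)) μ := by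
    by_contra h
    rw [integral_undef h] at hmean
    exact hM0.ne' hmean.symm
  -- masses
  set wm : ℕ → ℝ := fun j => (μ {ω | W ω = (j:ℤ)}).toReal with hwm
  set tm : ℕ → ℝ := fun k => (μ {ω | (k:ℤ) + 1 ≤ W ω}).toReal with htm
  set em : ℕ → ℝ := fun k => (μ {ω | We ω = (k:ℤ)}).toReal with hem
  set f : ℤ → ℝ := sf p B with hf
  set c : ℝ := ge0Prob p B with hc
  -- tail sums
  have hsum_tail : ∑' k : ℕ, μ {ω | (k:ℤ) + 1 ≤ W ω} = ENNReal.ofReal M := by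
    rw [tail_tsum_total μ W hW hWnonneg, mean_tsum μ W hW hWnonneg hWint, hmean]
  have htm_summ : Summable tm := by
    apply ENNReal.summable_toReal
    rw [hsum_tail]
    exact ENNReal.ofReal_ne_top
  have htm_sum : ∑' k : ℕ, tm k = M := by
    have := ENNReal.tsum_toReal_eq (f := fun k : ℕ => μ {ω | (k:ℤ) + 1 ≤ W ω})
      (fun k => measure_ne_top μ _)
    rw [hsum_tail] at this
    rw [htm, ← this, ENNReal.toReal_ofReal hM0.le]
  have htm0 : ∀ k, 0 ≤ tm k := fun k => ENNReal.toReal_nonneg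
  have hwm0 : ∀ j, 0 ≤ wm j := fun j => ENNReal.toReal_nonneg
  have hwm_summ : Summable wm := summable_mass_nat μ W hW
  -- equilibrium masses
  have hemv : ∀ k : ℕ, em k = tm k * M⁻¹ := by
    intro k
    show (μ {ω | We ω = (k:ℤ)}).toReal = tm k * M⁻¹
    rw [heq (k:ℤ) (by positivity), hmean, div_eq_mul_inv]
  have hem_summ : Summable em := by
    rw [show em = fun k => tm k * M⁻¹ from funext hemv]
    exact htm_summ.mul_right _
  have hem_sum : ∑' k : ℕ, em k = 1 := by
    rw [show em = fun k => tm k * M⁻¹ from funext hemv, tsum_mul_right, htm_sum,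
      mul_inv_cancel₀ hM0.ne']
  have hem0 : ∀ k, 0 ≤ em k := fun k => ENNReal.toReal_nonneg
  -- We is a.e. nonnegative
  have hWeneg : ∀ k : ℤ, k < 0 → μ {ω | We ω = k} = 0 := by
    have hdisj : Pairwise (Function.onFun Disjoint fun k : ℕ => {ω | We ω = (k:ℤ)}) := by
      intro i j hij
      rw [Function.onFun, Set.disjoint_left]
      intro ω h1 h2
      simp only [Set.mem_setOf_eq] at h1 h2
      exact hij (by omega)
    have hU : μ (⋃ k : ℕ, {ω | We ω = (k:ℤ)}) = 1 := by
      rw [measure_iUnion hdisj (fun k => measurableSet_fiber We hWe _)]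
      have h1 : ∀ k : ℕ, μ {ω | We ω = (k:ℤ)} = ENNReal.ofReal (em k) := by
        intro k
        rw [hem, ENNReal.ofReal_toReal (measure_ne_top μ _)]
      rw [tsum_congr h1, ← ENNReal.ofReal_tsum_of_nonneg hem0 hem_summ, hem_sum,
        ENNReal.ofReal_one]
    have hcompl : μ ((⋃ k : ℕ, {ω | We ω = (k:ℤ)})ᶜ) = 0 := by
      rw [measure_compl (MeasurableSet.iUnion fun k => measurableSet_fiber We hWe _)
        (measure_ne_top μ _), hU, measure_univ, tsub_self]
    intro k hk
    apply measure_mono_null _ hcompl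
    intro ω hω
    simp only [Set.mem_setOf_eq] at hω
    simp only [Set.mem_compl_iff, Set.mem_iUnion, Set.mem_setOf_eq, not_exists]
    intro n hn
    omega
  -- bounds on f
  have hfb : ∀ k : ℤ, |f k| ≤ p⁻¹ := fun k => abs_sf_le hp0 hp1 B k
  have hfb1 : ∀ k : ℤ, |f (k + 1)| ≤ p⁻¹ := fun k => abs_sf_le hp0 hp1 B (k + 1)
  have hdfb : ∀ k : ℤ, |f (k + 1) - f k| ≤ 1 := fun k => abs_sf_diff_le hp0 hp1 B k
  -- integral expansions
  have hIW : ∫ ω, f (W ω) ∂μ = ∑' j : ℕ, wm j * f j := by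
    rw [integral_comp_eq_tsum μ W hW f p⁻¹ hfb]
    apply tsum_int_of_neg_zero
    · intro k hk
      have : {ω | W ω = k} = ∅ := by
        ext ω
        simp only [Set.mem_setOf_eq, Set.mem_empty_iff_false, iff_false]
        intro h
        have := hWnonneg ω
        omega
      rw [this, measure_empty]
      simp
    · exact summable_mass_mul wm hwm_summ hwm0 _ p⁻¹ (fun n => hfb _)
  have hIWe : ∫ ω, f (We ω) ∂μ = ∑' k : ℕ, em k * f k := by
    rw [integral_comp_eq_tsum μ We hWe f p⁻¹ hfb]
    apply tsum_int_of_neg_zero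
    · intro k hk
      rw [hWeneg k hk]
      simp
    · exact summable_mass_mul em hem_summ hem0 _ p⁻¹ (fun n => hfb _)
  have hIWe1 : ∫ ω, f (We ω + 1) ∂μ = ∑' k : ℕ, em k * f (k + 1) := by
    rw [integral_comp_eq_tsum μ We hWe (fun k => f (k + 1)) p⁻¹ hfb1]
    apply tsum_int_of_neg_zero
    · intro k hk
      rw [hWeneg k hk]
      simp
    · exact summable_mass_mul em hem_summ hem0 _ p⁻¹ (fun n => hfb1 _)
  -- Fubini / Abel summation
  have htmr : ∀ k : ℕ, tm k = ∑' j : ℕ, (if k < j then wm j else 0) := by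
    intro k
    show (μ {ω | (k:ℤ) + 1 ≤ W ω}).toReal = _
    rw [tail_eq_tsum μ W hW hWnonneg k,
      ENNReal.tsum_toReal_eq (fun j => by split <;> simp [measure_ne_top])]
    refine tsum_congr fun j => ?_
    split <;> simp [hwm]
  have hT : ∑' k : ℕ, tm k * (f (k + 1) - f k) = ∑' j : ℕ, wm j * f j := by
    set F : ℕ × ℕ → ℝ := fun kj => (if kj.1 < kj.2 then wm kj.2 else 0) * (f (kj.1 + 1) - f kj.1)
      with hF
    set G : ℕ × ℕ → ℝ := fun kj => if kj.1 < kj.2 then wm kj.2 else 0 with hG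
    have hG0 : 0 ≤ G := by
      intro kj
      simp only [hG]
      split
      · exact hwm0 _
      · exact le_refl 0
    have hGslice : ∀ k : ℕ, Summable fun j : ℕ => G (k, j) := by
      intro k
      apply Summable.of_nonneg_of_le (fun j => hG0 (k, j)) _ hwm_summ
      intro j
      simp only [hG]
      split
      · exact le_refl _
      · exact hwm0 j
    have hGsum : Summable G := by
      rw [summable_prod_of_nonneg hG0]
      refine ⟨hGslice, ?_⟩
      have : (fun k : ℕ => ∑' j : ℕ, G (k, j)) = tm := by
        funext k
        rw [htmr k]
      rw [this]
      exact htm_summ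
    have hFsum : Summable F := by
      apply summable_abs_iff.mp
      apply Summable.of_nonneg_of_le (fun kj => abs_nonneg _) _ hGsum
      intro kj
      rw [hF]
      simp only
      rw [abs_mul]
      calc |if kj.1 < kj.2 then wm kj.2 else 0| * |f (kj.1 + 1) - f kj.1|
          ≤ |if kj.1 < kj.2 then wm kj.2 else 0| * 1 :=
            mul_le_mul_of_nonneg_left (hdfb _) (abs_nonneg _)
        _ = G kj := by
            rw [mul_one, abs_of_nonneg (hG0 kj)]
    have hswap : ∑' (k : ℕ) (j : ℕ), F (k, j) = ∑' (j : ℕ) (k : ℕ), F (k, j) :=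
      (Summable.tsum_comm (f := fun k j : ℕ => F (k, j)) hFsum).symm
    have hleft : ∀ k : ℕ, ∑' j : ℕ, F (k, j) = tm k * (f (k + 1) - f k) := by
      intro k
      rw [show (fun j : ℕ => F (k, j))
          = fun j : ℕ => (if k < j then wm j else 0) * (f (k + 1) - f k) from rfl,
        tsum_mul_right, ← htmr k]
    have hright : ∀ j : ℕ, ∑' k : ℕ, F (k, j) = wm j * f j := by
      intro j
      have hzero : ∀ k ∉ Finset.range j, F (k, j) = 0 := by
        intro k hk
        simp only [hF]
        rw [if_neg (by simpa using hk), zero_mul]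
      rw [tsum_eq_sum hzero]
      have hterm : ∀ k ∈ Finset.range j, F (k, j) = wm j * (f (k + 1) - f k) := by
        intro k hk
        simp only [hF]
        rw [if_pos (Finset.mem_range.mp hk)]
      rw [Finset.sum_congr rfl hterm, ← Finset.mul_sum]
      congr 1
      have htel : ∀ k : ℕ, f ((k : ℤ) + 1) - f (k : ℤ)
          = (fun n : ℕ => f (n : ℤ)) (k + 1) - (fun n : ℕ => f (n : ℤ)) k := by
        intro k
        have hcast : ((k+1 : ℕ) : ℤ) = (k:ℤ)+1 := by push_cast; ring
        simp only [hcast]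
      rw [Finset.sum_congr rfl (fun k _ => htel k), Finset.sum_range_sub (fun n : ℕ => f (n : ℤ))]
      have hf0 : f ((0:ℕ) : ℤ) = 0 := by
        rw [show ((0:ℕ) : ℤ) = (0:ℤ) by norm_num, hf, sf_zero hp0 hp1 B]
      rw [hf0, sub_zero]
    calc ∑' k : ℕ, tm k * (f (k + 1) - f k) = ∑' (k : ℕ) (j : ℕ), F (k, j) :=
          (tsum_congr fun k => hleft k).symm
      _ = ∑' (j : ℕ) (k : ℕ), F (k, j) := hswap
      _ = ∑' j : ℕ, wm j * f j := tsum_congr fun j => hright j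
  -- Stein identity integrated
  have hind_int : Integrable (fun ω => ind B (We ω)) μ :=
    integrable_comp_bounded μ We hWe (ind B) 1 (abs_ind_le_one B)
  have hfWe_int : Integrable (fun ω => f (We ω)) μ :=
    integrable_comp_bounded μ We hWe f p⁻¹ hfb
  have hfWe1_int : Integrable (fun ω => f (We ω + 1)) μ :=
    integrable_comp_bounded μ We hWe (fun k => f (k + 1)) p⁻¹ hfb1
  have hfW_int : Integrable (fun ω => f (W ω)) μ :=
    integrable_comp_bounded μ W hW f p⁻¹ hfb
  have hstein : (μ {ω | We ω ∈ B}).toReal - c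
      = q * ∫ ω, f (We ω + 1) ∂μ - ∫ ω, f (We ω) ∂μ := by
    have hindI : ∫ ω, ind B (We ω) ∂μ = (μ {ω | We ω ∈ B}).toReal := by
      have hps : (fun ω => ind B (We ω)) = Set.indicator {ω | We ω ∈ B} (fun _ => (1:ℝ)) := by
        funext ω
        by_cases h : We ω ∈ B
        · rw [ind_of_mem h, Set.indicator_of_mem (by exact h)]
        · rw [ind_of_not_mem h, Set.indicator_of_notMem (by exact h)]
      have hmeas : MeasurableSet {ω | We ω ∈ B} := hWe (B.to_countable.measurableSet)
      rw [hps, integral_indicator_const (1:ℝ) hmeas, smul_eq_mul, mul_one, measureReal_def]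
    have hpt : ∀ ω, ind B (We ω) - c = q * f (We ω + 1) - f (We ω) := by
      intro ω
      have h2 : f (We ω) = q * f (We ω + 1) - (ind B (We ω) - c) :=
        sf_stein hp0 hp1 B (We ω)
      linarith [h2]
    calc (μ {ω | We ω ∈ B}).toReal - c
        = ∫ ω, ind B (We ω) ∂μ - ∫ _ω, c ∂μ := by
          rw [hindI, integral_const, probReal_univ, one_smul]
      _ = ∫ ω, (ind B (We ω) - c) ∂μ := (integral_sub hind_int (integrable_const c)).symm
      _ = ∫ ω, (q * f (We ω + 1) - f (We ω)) ∂μ := by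
          refine integral_congr_ae (ae_of_all _ fun ω => ?_)
          exact hpt ω
      _ = q * ∫ ω, f (We ω + 1) ∂μ - ∫ ω, f (We ω) ∂μ := by
          rw [integral_sub (hfWe1_int.const_mul q) hfWe_int, integral_const_mul]
  -- assemble
  have hQ : q * ((∫ ω, f (We ω + 1) ∂μ) - ∫ ω, f (We ω) ∂μ) = p * ∫ ω, f (W ω) ∂μ := by
    have hs1 : Summable fun k : ℕ => em k * f ((k:ℤ) + 1) :=
      summable_mass_mul em hem_summ hem0 _ p⁻¹ (fun n => hfb1 _)
    have hs0 : Summable fun k : ℕ => em k * f (k:ℤ) :=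
      summable_mass_mul em hem_summ hem0 _ p⁻¹ (fun n => hfb _)
    have hdiff : (∫ ω, f (We ω + 1) ∂μ) - ∫ ω, f (We ω) ∂μ
        = (∑' k : ℕ, tm k * (f ((k:ℤ) + 1) - f (k:ℤ))) * M⁻¹ := by
      rw [hIWe1, hIWe, ← Summable.tsum_sub hs1 hs0]
      rw [show (fun k : ℕ => em k * f ((k:ℤ) + 1) - em k * f (k:ℤ))
          = fun k : ℕ => tm k * (f ((k:ℤ) + 1) - f (k:ℤ)) * M⁻¹ by
        funext k
        rw [hemv k]
        ring]
      rw [tsum_mul_right]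
    rw [hdiff, hT, ← hIW]
    have : q * M⁻¹ = p := by
      rw [hMdef, hqdef]
      have h1p : (1:ℝ) - p ≠ 0 := by linarith
      field_simp
    calc q * ((∫ ω, f (W ω) ∂μ) * M⁻¹) = q * M⁻¹ * ∫ ω, f (W ω) ∂μ := by ring
      _ = p * ∫ ω, f (W ω) ∂μ := by rw [this]
  have hdiff_eq : (μ {ω | We ω ∈ B}).toReal - c
      = p * ((∫ ω, f (W ω) ∂μ) - ∫ ω, f (We ω) ∂μ) := by
    have hq1 : q - 1 = -p := by rw [hqdef]; ring
    have h3 : q * ∫ ω, f (We ω + 1) ∂μ - ∫ ω, f (We ω) ∂μ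
        = q * ((∫ ω, f (We ω + 1) ∂μ) - ∫ ω, f (We ω) ∂μ) + (q - 1) * ∫ ω, f (We ω) ∂μ := by
      ring
    rw [hstein, h3, hQ, hq1]
    ring
  have hsub : (∫ ω, f (W ω) ∂μ) - ∫ ω, f (We ω) ∂μ = ∫ ω, (f (W ω) - f (We ω)) ∂μ :=
    (integral_sub hfW_int hfWe_int).symm
  have habs : |∫ ω, (f (W ω) - f (We ω)) ∂μ| ≤ ∫ ω, |f (W ω) - f (We ω)| ∂μ := by
    have := norm_integral_le_integral_norm (μ := μ) (f := fun ω => f (W ω) - f (We ω))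
    simpa [Real.norm_eq_abs] using this
  have hlint : ∫ ω, |f (W ω) - f (We ω)| ∂μ
      = (∫⁻ ω, ENNReal.ofReal |f (W ω) - f (We ω)| ∂μ).toReal := by
    have hm1 : Measurable fun ω => f (W ω) - f (We ω) :=
      Measurable.sub ((measurable_of_countable f).comp hW) ((measurable_of_countable f).comp hWe)
    have hm2 : Measurable fun ω => |f (W ω) - f (We ω)| := hm1.abs
    rw [integral_eq_lintegral_of_nonneg_ae (ae_of_all _ fun ω => abs_nonneg _)
      hm2.aestronglyMeasurable]
  have hmono : (∫⁻ ω, ENNReal.ofReal |f (W ω) - f (We ω)| ∂μ)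
      ≤ ∫⁻ ω, ENNReal.ofReal |(W ω : ℝ) - We ω| ∂μ := by
    refine lintegral_mono fun ω => ENNReal.ofReal_le_ofReal ?_
    exact abs_sf_sub_le hp0 hp1 B (W ω) (We ω)
  calc |(μ {ω | We ω ∈ B}).toReal - c|
      = p * |∫ ω, (f (W ω) - f (We ω)) ∂μ| := by
        rw [hdiff_eq, hsub, abs_mul, abs_of_nonneg hp0.le]
    _ ≤ p * ∫ ω, |f (W ω) - f (We ω)| ∂μ := mul_le_mul_of_nonneg_left habs hp0.le
    _ = p * (∫⁻ ω, ENNReal.ofReal |f (W ω) - f (We ω)| ∂μ).toReal := by rw [hlint]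
    _ ≤ p * (∫⁻ ω, ENNReal.ofReal |(W ω : ℝ) - We ω| ∂μ).toReal := by
        exact mul_le_mul_of_nonneg_left (ENNReal.toReal_mono hL hmono) hp0.le

end Key

end GeomAux


/-- Total variation distance between the law of an integer-valued random
variable `W` (under `μ`) and the geometric distribution `Ge⁰(p)` on `{0,1,2,...}`. -/
noncomputable def dTVGe0 {Ω : Type*} [MeasurableSpace Ω] (μ : Measure Ω)
    (W : Ω → ℤ) (p : ℝ) : ℝ :=
  ⨆ B : Set ℤ, |(μ {ω | W ω ∈ B}).toReal - ge0Prob p B|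

open GeomAux in
theorem geometric_approx_tv_equilibrium_nonneg
    {Ω : Type*} [m0 : MeasurableSpace Ω] (μ : Measure Ω) [IsProbabilityMeasure μ]
    (W We : Ω → ℤ) (hW : Measurable W) (hWe : Measurable We)
    (p : ℝ) (hp0 : 0 < p) (hp1 : p ≤ 1)
    (hWnonneg : ∀ ω, 0 ≤ W ω)
    (hWzero : 0 < μ {ω | W ω = 0})
    (hmean : ∫ ω, (W ω : ℝ) ∂μ = (1 - p) / p)
    (heq : ∀ k : ℤ, 0 ≤ k →
      (μ {ω | We ω = k}).toReal = (μ {ω | k + 1 ≤ W ω}).toReal / ∫ ω, (W ω : ℝ) ∂μ) :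
    ENNReal.ofReal (dTVGe0 μ We p)
      ≤ ENNReal.ofReal p * ∫⁻ ω, ENNReal.ofReal |(W ω : ℝ) - We ω| ∂μ := by
  classical
  set L : ENNReal := ∫⁻ ω, ENNReal.ofReal |(W ω : ℝ) - We ω| ∂μ with hLdef
  have habs_le_one : ∀ B : Set ℤ, |(μ {ω | We ω ∈ B}).toReal - ge0Prob p B| ≤ 1 := by
    intro B
    rw [abs_le]
    have h1 : 0 ≤ (μ {ω | We ω ∈ B}).toReal := ENNReal.toReal_nonneg
    have h2 : (μ {ω | We ω ∈ B}).toReal ≤ 1 := by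
      rw [← ENNReal.toReal_one]
      exact ENNReal.toReal_mono ENNReal.one_ne_top prob_le_one
    have h3 := ge0Prob_nonneg hp0 hp1 B
    have h4 := ge0Prob_le_one hp0 hp1 B
    constructor <;> linarith
  rcases eq_or_lt_of_le hp1 with hp1e | hp1l
  · -- degenerate case p = 1
    have hdtv : dTVGe0 μ We p ≤ 1 := ciSup_le habs_le_one
    have hLge : 1 ≤ L := by
      have hmean0 : ∫ ω, (W ω : ℝ) ∂μ = 0 := by rw [hmean, hp1e]; norm_num
      have hek : ∀ k : ℕ, μ {ω | We ω = (k:ℤ)} = 0 := by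
        intro k
        have h := heq (k:ℤ) (by positivity)
        rw [hmean0, div_zero] at h
        rcases (ENNReal.toReal_eq_zero_iff _).mp h with h' | h'
        · exact h'
        · exact absurd h' (measure_ne_top μ _)
      have hU : μ (⋃ k : ℕ, {ω | We ω = (k:ℤ)}) = 0 := measure_iUnion_null hek
      have hae : ∀ᵐ ω ∂μ, (1 : ENNReal) ≤ ENNReal.ofReal |(W ω : ℝ) - We ω| := by
        have hnm : ∀ᵐ ω ∂μ, ω ∉ ⋃ k : ℕ, {ω | We ω = (k:ℤ)} := by
          rw [← compl_mem_ae_iff] at hU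
          exact hU
        filter_upwards [hnm] with ω hω
        simp only [Set.mem_iUnion, Set.mem_setOf_eq, not_exists] at hω
        have hneg : We ω < 0 := by
          by_contra h
          push_neg at h
          exact hω (We ω).toNat (by omega)
        have hz : (1:ℤ) ≤ W ω - We ω := by
          have := hWnonneg ω
          omega
        have hr : (1:ℝ) ≤ |(W ω : ℝ) - We ω| := by
          have hr1 : (1:ℝ) ≤ (W ω : ℝ) - We ω := by exact_mod_cast hz
          exact hr1.trans (le_abs_self _)
        calc (1 : ENNReal) = ENNReal.ofReal 1 := ENNReal.ofReal_one.symm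
          _ ≤ ENNReal.ofReal |(W ω : ℝ) - We ω| := ENNReal.ofReal_le_ofReal hr
      calc (1 : ENNReal) = ∫⁻ _ω, 1 ∂μ := by rw [lintegral_one, measure_univ]
        _ ≤ L := lintegral_mono_ae hae
    calc ENNReal.ofReal (dTVGe0 μ We p) ≤ ENNReal.ofReal 1 := ENNReal.ofReal_le_ofReal hdtv
      _ = 1 := ENNReal.ofReal_one
      _ ≤ L := hLge
      _ = ENNReal.ofReal p * L := by rw [hp1e, ENNReal.ofReal_one, one_mul]
  · -- main case p < 1
    by_cases hLtop : L = ⊤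
    · rw [hLtop, ENNReal.mul_top (by
        simp only [ne_eq, ENNReal.ofReal_eq_zero, not_le]
        exact hp0)]
      exact le_top
    · have hB : ∀ B : Set ℤ, |(μ {ω | We ω ∈ B}).toReal - ge0Prob p B| ≤ p * L.toReal :=
        fun B => key_bound μ W We hW hWe p hp0 hp1l hWnonneg hmean heq B hLtop
      have hdtv : dTVGe0 μ We p ≤ p * L.toReal := ciSup_le hB
      calc ENNReal.ofReal (dTVGe0 μ We p) ≤ ENNReal.ofReal (p * L.toReal) :=
            ENNReal.ofReal_le_ofReal hdtv
        _ = ENNReal.ofReal p * ENNReal.ofReal L.toReal := ENNReal.ofReal_mul hp0.le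
        _ = ENNReal.ofReal p * L := by rw [ENNReal.ofReal_toReal hLtop]
end

section
/- Fix 0 < p ≤ 1, set q = 1 − p, and let B be a set of positive integers. Define f: ℤ≥0 → ℝ by f(0) = 0 and f(k) = Σ_{i ∈ B} q^{i−1} − Σ_{i ∈ B, i ≥ k+1} q^{i−k−1} for k ≥ 1. Then f satisfies q·f(k) − f(k−1) = 1[k ∈ B] − Ge(p){B} for all k ≥ 1, and sup_{k ≥ 1} |f(k) − f(k−1)| ≤ 1. Moreover, if B = {m} is a singleton, then sup_{k ≥ 0} |f(k)| ≤ 1. -/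
open MeasureTheory ProbabilityTheory Real Classical

theorem stein_solution_properties
    (p : ℝ) (hp0 : 0 < p) (hp1 : p ≤ 1) (q : ℝ) (hq : q = 1 - p)
    (B : Set ℕ) (hB : ∀ i ∈ B, 1 ≤ i)
    (f : ℕ → ℝ) (hf0 : f 0 = 0)
    (hf : ∀ k : ℕ, 1 ≤ k →
      f k = (∑' i : B, q ^ ((i : ℕ) - 1))
        - ∑' i : {i : ℕ // i ∈ B ∧ k + 1 ≤ i}, q ^ ((i : ℕ) - k - 1)) :
    (∀ k : ℕ, 1 ≤ k →
      q * f k - f (k - 1)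
        = (if k ∈ B then (1 : ℝ) else 0) - ∑' i : B, (1 - p) ^ ((i : ℕ) - 1) * p)
    ∧ (∀ k : ℕ, 1 ≤ k → |f k - f (k - 1)| ≤ 1)
    ∧ (∀ m : ℕ, B = {m} → ∀ k : ℕ, |f k| ≤ 1) := by
  have hq0 : 0 ≤ q := by rw [hq]; linarith
  have hq1 : q < 1 := by rw [hq]; linarith
  set F : ℕ → ℝ := fun k => ∑' j : ℕ, (if k + 1 + j ∈ B then q ^ j else 0) with hF
  have hgeo : Summable (fun j : ℕ => q ^ j) := summable_geometric_of_lt_one hq0 hq1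
  have hsum : ∀ k, Summable (fun j : ℕ => if k + 1 + j ∈ B then q ^ j else 0) := by
    intro k
    apply Summable.of_nonneg_of_le _ _ hgeo
    · intro j; split_ifs <;> positivity
    · intro j; split_ifs
      · exact le_refl _
      · positivity
  -- conversion from subtype tsum to F
  have hT : ∀ k : ℕ, (∑' i : {i : ℕ // i ∈ B ∧ k + 1 ≤ i}, q ^ ((i : ℕ) - k - 1)) = F k := by
    intro k
    let e : {j : ℕ // k + 1 + j ∈ B} ≃ {i : ℕ // i ∈ B ∧ k + 1 ≤ i} :=
      { toFun := fun j => ⟨k + 1 + j, j.2, Nat.le_add_right _ _⟩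
        invFun := fun i => ⟨i.1 - (k + 1), by
          have h2 := i.2.2
          have : k + 1 + (i.1 - (k + 1)) = i.1 := by omega
          rw [this]; exact i.2.1⟩
        left_inv := fun j => by ext; simp
        right_inv := fun i => by ext; have := i.2.2; simp; omega }
    rw [← Equiv.tsum_eq e]
    have h1 : ∀ j : {j : ℕ // k + 1 + j ∈ B}, q ^ (((e j : ℕ)) - k - 1) = q ^ (j : ℕ) := by
      intro j
      congr 1
      show k + 1 + (j : ℕ) - k - 1 = (j : ℕ)
      omega
    rw [tsum_congr h1]
    have h2 : (∑' j : {j : ℕ // k + 1 + j ∈ B}, q ^ (j : ℕ))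
        = ∑' j : ℕ, Set.indicator {j : ℕ | k + 1 + j ∈ B} (fun j => q ^ j) j :=
      tsum_subtype _ _
    rw [h2, hF]
    apply tsum_congr
    intro j
    simp [Set.indicator_apply]
  have hS : (∑' i : B, q ^ ((i : ℕ) - 1)) = F 0 := by
    let e : B ≃ {i : ℕ // i ∈ B ∧ 0 + 1 ≤ i} :=
      { toFun := fun i => ⟨i.1, i.2, hB i.1 i.2⟩
        invFun := fun i => ⟨i.1, i.2.1⟩
        left_inv := fun i => rfl
        right_inv := fun i => rfl }
    rw [← hT 0, ← Equiv.tsum_eq e]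
    apply tsum_congr
    intro i
    rfl
  have hfk : ∀ k : ℕ, f k = F 0 - F k := by
    intro k
    rcases Nat.eq_zero_or_pos k with h | h
    · subst h; simp [hf0]
    · rw [hf k h, hS, hT]
  have hrec : ∀ n : ℕ, F n = (if n + 1 ∈ B then (1 : ℝ) else 0) + q * F (n + 1) := by
    intro n
    simp only [hF]
    rw [Summable.tsum_eq_zero_add (hsum n)]
    have h0 : (if n + 1 + 0 ∈ B then q ^ 0 else (0:ℝ)) = (if n + 1 ∈ B then (1:ℝ) else 0) := by
      norm_num
    rw [h0]
    congr 1
    rw [← tsum_mul_left]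
    apply tsum_congr
    intro j
    have h : n + 1 + (j + 1) = n + 1 + 1 + j := by omega
    rw [h]
    split_ifs
    · ring
    · ring
  have hFnn : ∀ k, 0 ≤ F k := by
    intro k
    apply tsum_nonneg
    intro j
    split_ifs <;> positivity
  have hFle : ∀ k, F k ≤ p⁻¹ := by
    intro k
    have h1 : F k ≤ ∑' j : ℕ, q ^ j := by
      apply Summable.tsum_le_tsum _ (hsum k) hgeo
      intro j
      split_ifs
      · exact le_refl _
      · positivity
    rw [tsum_geometric_of_lt_one hq0 hq1] at h1
    have h2 : 1 - q = p := by rw [hq]; ring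
    rwa [h2] at h1
  have hpF : ∀ k, p * F k ≤ 1 := by
    intro k
    calc p * F k ≤ p * p⁻¹ := mul_le_mul_of_nonneg_left (hFle k) hp0.le
    _ = 1 := mul_inv_cancel₀ hp0.ne'
  refine ⟨?_, ?_, ?_⟩
  · intro k hk
    obtain ⟨n, rfl⟩ : ∃ n, k = n + 1 := ⟨k - 1, by omega⟩
    have hR : (∑' i : B, (1 - p) ^ ((i : ℕ) - 1) * p) = F 0 * p := by
      rw [← hq, tsum_mul_right, hS]
    rw [hR]
    simp only [Nat.add_sub_cancel]
    rw [hfk (n + 1), hfk n, hrec n, hq]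
    ring
  · intro k hk
    obtain ⟨n, rfl⟩ : ∃ n, k = n + 1 := ⟨k - 1, by omega⟩
    simp only [Nat.add_sub_cancel]
    rw [hfk (n + 1), hfk n, hrec n]
    have h1 : 0 ≤ p * F (n + 1) := mul_nonneg hp0.le (hFnn _)
    have h2 : p * F (n + 1) ≤ 1 := hpF (n + 1)
    rw [abs_le]
    constructor
    · split_ifs <;> rw [hq] <;> nlinarith
    · split_ifs <;> rw [hq] <;> nlinarith
  · intro m hBm k
    have hFle1 : ∀ k, F k ≤ 1 := by
      intro k
      by_cases h : k + 1 ≤ m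
      · have hv : F k = q ^ (m - (k + 1)) := by
          rw [hF]
          simp only [hBm, Set.mem_singleton_iff]
          rw [tsum_eq_single (m - (k + 1))]
          · rw [if_pos (by omega)]
          · intro j hj
            rw [if_neg (by omega)]
        rw [hv]
        exact pow_le_one₀ hq0 (by linarith)
      · have hv : F k = 0 := by
          rw [hF]
          simp only [hBm, Set.mem_singleton_iff]
          convert tsum_zero with j
          rw [if_neg (by omega)]
        rw [hv]; norm_num
    rw [hfk k, abs_le]
    constructor <;> [skip; skip] <;>
      linarith [hFnn 0, hFnn k, hFle1 0, hFle1 k]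
end

section
/- Let 0 < a ≤ 1 and 0 ≤ μ ≤ 1. Let M have distribution Ge⁰(a) and, conditional on M, let W have the binomial distribution with parameters M and μ. Then W has distribution Ge⁰(a/(a + μ(1−a))); that is, P(W = k) = (1−p)^k p with p = a/(a + μ(1−a)) for all k = 0,1,2,.... -/
open MeasureTheory ProbabilityTheory Real

theorem geometric_binomial_mixture
    {Ω : Type*} [MeasurableSpace Ω] (μ : Measure Ω) [IsProbabilityMeasure μ]
    (a b : ℝ) (ha0 : 0 < a) (ha1 : a ≤ 1) (hb0 : 0 ≤ b) (hb1 : b ≤ 1)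
    (M W : Ω → ℕ) (hM : Measurable M) (hW : Measurable W)
    -- `M` is geometric on `{0,1,2,...}` with parameter `a`
    (hMlaw : ∀ k : ℕ, (μ {ω | M ω = k}).toReal = (1 - a) ^ k * a)
    (hWle : ∀ ω, W ω ≤ M ω)
    -- conditional on `M`, `W` has the binomial distribution with parameters `M` and `b`
    (hcond : ∀ m k : ℕ, k ≤ m →
      (μ {ω | M ω = m ∧ W ω = k}).toReal
        = (μ {ω | M ω = m}).toReal * (m.choose k) * b ^ k * (1 - b) ^ (m - k)) :
    ∀ k : ℕ, (μ {ω | W ω = k}).toReal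
      = (1 - a / (a + b * (1 - a))) ^ k * (a / (a + b * (1 - a))) := by
  intro k
  set r := a + b * (1 - a) with hr
  have hq0 : 0 ≤ 1 - a := by linarith
  have hq1 : 1 - a < 1 := by linarith
  have hrpos : 0 < r := by nlinarith
  set f : ℕ → ℝ := fun m => (μ {ω | M ω = m ∧ W ω = k}).toReal with hf
  -- decompose {W = k} over values of M
  have hUnion : {ω | W ω = k} = ⋃ m, {ω | M ω = m ∧ W ω = k} := by
    ext ω; simp
  have hmeas : ∀ m : ℕ, MeasurableSet {ω | M ω = m ∧ W ω = k} := fun m => by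
    have : {ω | M ω = m ∧ W ω = k} = M ⁻¹' {m} ∩ W ⁻¹' {k} := by
      ext ω; simp [Set.mem_preimage]
    rw [this]
    exact (hM (measurableSet_singleton m)).inter (hW (measurableSet_singleton k))
  have hdisj : Pairwise (Function.onFun Disjoint fun m => {ω | M ω = m ∧ W ω = k}) := by
    intro i j hij
    simp only [Function.onFun, Set.disjoint_left]
    rintro ω ⟨h1, _⟩ ⟨h2, _⟩
    exact hij (h1 ▸ h2 ▸ rfl)
  have htoReal : (μ {ω | W ω = k}).toReal = ∑' m, f m := by
    rw [hUnion, measure_iUnion hdisj hmeas, ENNReal.tsum_toReal_eq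
      (fun m => measure_ne_top μ _)]
  rw [htoReal]
  -- the sum
  set x : ℝ := (1 - a) * (1 - b) with hx
  have hx0 : 0 ≤ x := mul_nonneg hq0 (by linarith)
  have hx1 : x < 1 := by nlinarith
  have hxnorm : ‖x‖ < 1 := by rwa [Real.norm_eq_abs, abs_of_nonneg hx0]
  set c : ℝ := a * (1 - a) ^ k * b ^ k with hc
  have hS : HasSum f (c * (1 / (1 - x) ^ (k + 1))) := by
    have hinj : Function.Injective (fun j : ℕ => j + k) := fun i j h => by
      simpa using h
    rw [← Function.Injective.hasSum_iff hinj ?_]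
    · have := (hasSum_choose_mul_geometric_of_norm_lt_one (𝕜 := ℝ) k hxnorm).mul_left c
      convert this using 2 with j
      show f (j + k) = _
      rw [hf]
      simp only []
      rw [hcond (j + k) k (by omega), hMlaw]
      have : j + k - k = j := by omega
      rw [this, hc, hx, mul_pow]
      ring
      rfl
    · intro m hm
      have hmk : m < k := by
        by_contra h
        exact hm ⟨m - k, by simp; omega⟩
      have : {ω | M ω = m ∧ W ω = k} = ∅ := by
        ext ω
        simp only [Set.mem_setOf_eq, Set.mem_empty_iff_false, iff_false, not_and]
        intro h1 h2
        have := hWle ω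
        omega
      simp [hf, this]
  rw [hS.tsum_eq]
  have h1x : 1 - x = r := by rw [hx, hr]; ring
  rw [h1x, hc]
  have h1 : 1 - a / r = b * (1 - a) / r := by field_simp; ring
  rw [h1]
  rw [div_pow, mul_pow, pow_succ]
  field_simp
end

section
/- Fix n ≥ 1. Let X₁, ..., X_n be independent random variables with Xᵢ Bernoulli with success probability 1/(n − i + 1), let N be uniformly distributed on {1, 2, ..., n} and independent of the Xᵢ, and let W = Σ_{i=1}^N Xᵢ. (W is distributed as the in-degree of a uniformly random node in the uniform attachment random graph on n nodes, in which node m attaches a directed edge to a node chosen uniformly among the m nodes present, the initial node having a single loop.) Then dTV(L(W), Ge⁰(1/2)) ≤ 1/n. -/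
open MeasureTheory ProbabilityTheory Real

/-- `Ge⁰(p){B}`: probability that a geometric random variable on `{0,1,2,...}`
with parameter `p` (mass `(1-p)^k p` at `k`) lies in `B ⊆ ℕ`. -/
noncomputable def ge0ProbN (p : ℝ) (B : Set ℕ) : ℝ :=
  ∑' k : ℕ, B.indicator (fun _ => (1 - p) ^ k * p) k

/-- Total variation distance between the law of a `ℕ`-valued random
variable `W` (under `μ`) and the geometric distribution `Ge⁰(p)` on `{0,1,2,...}`. -/
noncomputable def dTVGe0N {Ω : Type*} [MeasurableSpace Ω] (μ : Measure Ω)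
    (W : Ω → ℕ) (p : ℝ) : ℝ :=
  ⨆ B : Set ℕ, |(μ {ω | W ω ∈ B}).toReal - ge0ProbN p B|

open Finset
open scoped Classical

namespace UAaux



/-- success probability of the `i`-th Bernoulli variable. -/
noncomputable def uaP (n i : ℕ) : ℝ := 1 / ((n : ℝ) - i + 1)

/-- `uaQ n m k` = P(X₁ + ⋯ + X_m = k). -/
noncomputable def uaQ (n : ℕ) : ℕ → ℕ → ℝ
  | 0, k => if k = 0 then 1 else 0
  | m + 1, k =>
      (1 - uaP n (m + 1)) * uaQ n m k +
        uaP n (m + 1) * (if k = 0 then 0 else uaQ n m (k - 1))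

lemma uaP_den (n i : ℕ) (h2 : i ≤ n) : (1 : ℝ) ≤ (n : ℝ) - i + 1 := by
  have : (i : ℝ) ≤ n := Nat.cast_le.mpr h2
  linarith

lemma uaP_nonneg (n i : ℕ) (h2 : i ≤ n) : 0 ≤ uaP n i := by
  have := uaP_den n i h2
  unfold uaP; positivity

lemma uaP_le_one (n i : ℕ) (h2 : i ≤ n) : uaP n i ≤ 1 := by
  have h := uaP_den n i h2
  rw [uaP, div_le_one (by linarith)]
  linarith

lemma uaQ_nonneg (n : ℕ) : ∀ m, m ≤ n → ∀ k, 0 ≤ uaQ n m k := by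
  intro m
  induction m with
  | zero => intro _ k; simp only [uaQ]; split <;> norm_num
  | succ m ih =>
    intro h k
    have hm : m ≤ n := Nat.le_of_succ_le h
    have h1 := uaP_nonneg n (m+1) h
    have h2 := uaP_le_one n (m+1) h
    have h3 := ih hm k
    have h4 : 0 ≤ (if k = 0 then (0:ℝ) else uaQ n m (k-1)) := by
      split
      · exact le_refl _
      · exact ih hm (k-1)
    show 0 ≤ (1 - uaP n (m + 1)) * uaQ n m k +
        uaP n (m + 1) * (if k = 0 then 0 else uaQ n m (k - 1))
    nlinarith

lemma uaQ_eq_zero (n : ℕ) : ∀ m k, m < k → uaQ n m k = 0 := by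
  intro m
  induction m with
  | zero =>
    intro k hk
    show (if k = 0 then (1:ℝ) else 0) = 0
    rw [if_neg (by omega)]
  | succ m ih =>
    intro k hk
    show (1 - uaP n (m + 1)) * uaQ n m k +
        uaP n (m + 1) * (if k = 0 then 0 else uaQ n m (k - 1)) = 0
    rw [ih k (by omega)]
    have : ¬ (k = 0) := by omega
    rw [if_neg this, ih (k-1) (by omega)]
    ring




lemma uaQ_zero_def (n k : ℕ) : uaQ n 0 k = if k = 0 then 1 else 0 := rfl
lemma uaQ_succ_def (n m k : ℕ) : uaQ n (m+1) k = (1 - uaP n (m + 1)) * uaQ n m k +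
        uaP n (m + 1) * (if k = 0 then 0 else uaQ n m (k - 1)) := rfl

-- sum to one
lemma uaQ_sum (n : ℕ) : ∀ m, m ≤ n → ∑ k ∈ range (n+1), uaQ n m k = 1 := by
  intro m
  induction m with
  | zero =>
    intro _
    simp [uaQ_zero_def, Finset.sum_ite_eq' (range (n+1)) 0 (fun _ => (1:ℝ))]
  | succ m ih =>
    intro h
    have hm : m ≤ n := Nat.le_of_succ_le h
    simp only [uaQ_succ_def, Finset.sum_add_distrib, ← Finset.mul_sum]
    rw [ih hm]
    have hshift : ∑ k ∈ range (n+1), (if k = 0 then (0:ℝ) else uaQ n m (k-1))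
        = ∑ i ∈ range n, uaQ n m i := by
      rw [Finset.sum_range_succ' (fun k => if k = 0 then (0:ℝ) else uaQ n m (k-1)) n]
      simp
    rw [hshift]
    have : ∑ i ∈ range n, uaQ n m i = 1 := by
      have := ih hm
      rw [Finset.sum_range_succ] at this
      rw [uaQ_eq_zero n m n (by omega)] at this
      linarith
    rw [this]; ring

-- telescoping identity
lemma uaD_rec (n : ℕ) (k : ℕ) :
    (if k = 0 then (0:ℝ) else ∑ m ∈ range n, uaQ n m (k-1)) - 2 * ∑ m ∈ range n, uaQ n m k
    = uaQ n n k - ((n:ℝ)+1) * (if k = 0 then 1 else 0) := by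
  have key : ∀ m, m < n →
      (((n:ℝ) - (↑(m+1):ℝ) + 1) * uaQ n (m+1) k) - (((n:ℝ) - m + 1) * uaQ n m k)
      = (if k = 0 then (0:ℝ) else uaQ n m (k-1)) - 2 * uaQ n m k := by
    intro m hm
    have hd : ((n:ℝ) - m) ≠ 0 := by
      have : (m:ℝ) + 1 ≤ n := by exact_mod_cast Nat.succ_le_of_lt hm
      linarith
    have hp : uaP n (m+1) = 1 / ((n:ℝ) - m) := by
      unfold uaP; push_cast; ring_nf
    rw [uaQ_succ_def, hp]
    push_cast
    field_simp
    ring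
  have tele : ∑ m ∈ range n, ((((n:ℝ) - (↑(m+1):ℝ) + 1) * uaQ n (m+1) k) - (((n:ℝ) - m + 1) * uaQ n m k))
      = ((n:ℝ) - (n:ℝ) + 1) * uaQ n n k - ((n:ℝ) - ((0:ℕ):ℝ) + 1) * uaQ n 0 k :=
    Finset.sum_range_sub (fun m => ((n:ℝ) - m + 1) * uaQ n m k) n
  have lhs_eq : ∑ m ∈ range n, ((if k = 0 then (0:ℝ) else uaQ n m (k-1)) - 2 * uaQ n m k)
      = (if k = 0 then (0:ℝ) else ∑ m ∈ range n, uaQ n m (k-1)) - 2 * ∑ m ∈ range n, uaQ n m k := by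
    rw [Finset.sum_sub_distrib, ← Finset.mul_sum]
    congr 1
    split
    · simp
    · rfl
  have hsum : ∑ m ∈ range n, ((((n:ℝ) - (↑(m+1):ℝ) + 1) * uaQ n (m+1) k) - (((n:ℝ) - m + 1) * uaQ n m k))
      = ∑ m ∈ range n, ((if k = 0 then (0:ℝ) else uaQ n m (k-1)) - 2 * uaQ n m k) :=
    Finset.sum_congr rfl (fun m hm => key m (Finset.mem_range.mp hm))
  rw [← lhs_eq, ← hsum, tele, uaQ_zero_def]
  push_cast
  split <;> ring




/-- the coefficient of the full product -/
noncomputable def uaC (n k : ℕ) : ℝ := uaQ n n k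
/-- geometric tail sequence -/
noncomputable def uaNu (k : ℕ) : ℝ := if k = 0 then 0 else (2⁻¹ : ℝ)^k
noncomputable def uaDel (k : ℕ) : ℝ := if k = 0 then 1 else 0
/-- convolution `uaC * uaNu` -/
noncomputable def uaE (n k : ℕ) : ℝ := ∑ j ∈ range (n+1), uaC n j * uaNu (k - j)
/-- cumulative helper -/
noncomputable def uaF (n k : ℕ) : ℝ := ∑ j ∈ range (k+1), uaC n j * (2⁻¹ : ℝ)^(k+1-j)
/-- the law of W -/
noncomputable def uaT (n k : ℕ) : ℝ :=
  (1/(n:ℝ)) * ((∑ m ∈ range n, uaQ n m k) + uaC n k - uaDel k)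

lemma uaD_eq (n : ℕ) : ∀ k, ∑ m ∈ range n, uaQ n m k
    = ((n:ℝ)+1) * (2⁻¹:ℝ)^(k+1) - uaF n k := by
  intro k
  induction k with
  | zero =>
    have h := uaD_rec n 0
    norm_num at h
    have : uaF n 0 = uaC n 0 * (2⁻¹:ℝ) := by
      unfold uaF; simp
    rw [this]
    rw [show (0:ℕ)+1 = 1 from rfl, pow_one]
    unfold uaC at *
    linarith
  | succ k ih =>
    have h := uaD_rec n (k+1)
    rw [if_neg (by omega)] at h
    simp only [Nat.add_sub_cancel] at h
    rw [if_neg (by omega), mul_zero, sub_zero] at h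
    have hF : uaF n (k+1) = 2⁻¹ * uaF n k + uaC n (k+1) * 2⁻¹ := by
      unfold uaF
      rw [Finset.sum_range_succ]
      have : ∀ j ∈ range (k+1), uaC n j * (2⁻¹:ℝ)^(k+1+1-j) = 2⁻¹ * (uaC n j * (2⁻¹:ℝ)^(k+1-j)) := by
        intro j hj
        have hj' : j ≤ k := by simpa [Nat.lt_succ_iff] using hj
        have : k+1+1-j = (k+1-j)+1 := by omega
        rw [this, pow_succ]
        ring
      rw [Finset.sum_congr rfl this, ← Finset.mul_sum]
      congr 1
      have : k+1+1-(k+1) = 1 := by omega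
      rw [this, pow_one]
    rw [ih] at h
    rw [hF, pow_succ]
    unfold uaC at *
    linarith

lemma uaT_zero (n k : ℕ) (hk : n < k) : uaT n k = 0 := by
  unfold uaT uaC uaDel
  rw [uaQ_eq_zero n n k hk, if_neg (by omega)]
  have : ∑ m ∈ range n, uaQ n m k = 0 := by
    apply Finset.sum_eq_zero
    intro m hm
    exact uaQ_eq_zero n m k (by have := Finset.mem_range.mp hm; omega)
  rw [this]; ring

lemma two_uaF (n k : ℕ) : 2 * uaF n k = uaC n k + ∑ j ∈ range k, uaC n j * (2⁻¹:ℝ)^(k-j) := by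
  unfold uaF
  rw [Finset.sum_range_succ]
  have : ∀ j ∈ range k, uaC n j * (2⁻¹:ℝ)^(k+1-j) = 2⁻¹ * (uaC n j * (2⁻¹:ℝ)^(k-j)) := by
    intro j hj
    have hj' : j < k := Finset.mem_range.mp hj
    have : k+1-j = (k-j)+1 := by omega
    rw [this, pow_succ]; ring
  rw [Finset.sum_congr rfl this, ← Finset.mul_sum]
  have : k+1-k = 1 := by omega
  rw [this, pow_one]
  ring

lemma uaE_eq (n k : ℕ) : uaE n k = ∑ j ∈ range k, uaC n j * (2⁻¹:ℝ)^(k-j) := by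
  unfold uaE
  rcases le_total (n+1) k with h | h
  · -- extend range (n+1) to range k : extra terms have uaC = 0
    rw [Finset.sum_subset (Finset.range_subset_range.mpr h)]
    · apply Finset.sum_congr rfl
      intro j hj
      have hj' : j < k := Finset.mem_range.mp hj
      unfold uaNu
      rw [if_neg (by omega)]
    · intro j _ hj
      have hnj : n < j := by
        rcases Nat.lt_or_ge j (n+1) with h' | h'
        · exact absurd (Finset.mem_range.mpr h') hj
        · omega
      show uaQ n n j * uaNu (k - j) = 0
      rw [uaQ_eq_zero n n j hnj]
      ring
  · -- shrink: extra terms in range (n+1) beyond k have uaNu (k - j) = uaNu 0 = 0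
    rw [← Finset.sum_subset (Finset.range_subset_range.mpr h)]
    · apply Finset.sum_congr rfl
      intro j hj
      have hj' : j < k := Finset.mem_range.mp hj
      unfold uaNu
      rw [if_neg (by omega)]
    · intro j _ hj
      have hkj : k ≤ j := by
        rcases Nat.lt_or_ge j k with h' | h'
        · exact absurd (Finset.mem_range.mpr h') hj
        · omega
      have : k - j = 0 := by omega
      rw [this]
      unfold uaNu
      rw [if_pos rfl]
      ring




lemma uaT_sub (n : ℕ) (hn : 1 ≤ n) (k : ℕ) :
    uaT n k - (1 - 1/2:ℝ)^k * (1/2)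
      = (1/(2*(n:ℝ))) * (uaC n k + uaNu k - uaDel k - uaE n k) := by
  have hn' : (n:ℝ) ≠ 0 := by
    have : (1:ℝ) ≤ n := by exact_mod_cast hn
    linarith
  have hnu : uaNu k = (2⁻¹:ℝ)^k - uaDel k := by
    unfold uaNu uaDel
    split
    · subst ‹k = 0›; norm_num
    · ring
  have hg : (1 - 1/2:ℝ)^k * (1/2) = (2⁻¹:ℝ)^(k+1) := by
    rw [pow_succ]; norm_num
  have hE : uaE n k = 2 * uaF n k - uaC n k := by
    rw [uaE_eq, two_uaF]; ring
  rw [uaT, uaD_eq n k, hg, hE, hnu]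
  field_simp
  ring




lemma half_summable : Summable (fun k : ℕ => (2⁻¹:ℝ)^k) :=
  summable_geometric_of_lt_one (by norm_num) (by norm_num)

lemma half_tsum : ∑' k : ℕ, (2⁻¹:ℝ)^k = 2 := by
  rw [tsum_geometric_of_lt_one (by norm_num) (by norm_num)]
  norm_num

lemma uaNu_nonneg (k : ℕ) : 0 ≤ uaNu k := by unfold uaNu; split <;> positivity
lemma uaDel_nonneg (k : ℕ) : 0 ≤ uaDel k := by unfold uaDel; split <;> norm_num

lemma uaNu_le (k : ℕ) : uaNu k ≤ (2⁻¹:ℝ)^k := by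
  unfold uaNu; split
  · positivity
  · exact le_refl _

lemma uaNu_summable : Summable uaNu :=
  Summable.of_nonneg_of_le uaNu_nonneg uaNu_le half_summable

lemma uaDel_summable : Summable uaDel := by
  apply summable_of_ne_finset_zero (s := {0})
  intro k hk
  unfold uaDel
  rw [if_neg (by simpa using hk)]

lemma uaDel_tsum : ∑' k, uaDel k = 1 := by
  unfold uaDel
  exact tsum_ite_eq 0 1

lemma uaNu_tsum : ∑' k, uaNu k = 1 := by
  have h : uaNu = fun k => (2⁻¹:ℝ)^k - uaDel k := by
    funext k
    unfold uaNu uaDel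
    split
    · subst ‹k = 0›; norm_num
    · ring
  rw [h, Summable.tsum_sub half_summable uaDel_summable, half_tsum, uaDel_tsum]
  norm_num

lemma uaNu_shift_summable (j : ℕ) : Summable (fun k => uaNu (k - j)) := by
  have hle : ∀ k, uaNu (k - j) ≤ (2:ℝ)^j * (2⁻¹:ℝ)^k := by
    intro k
    rcases Nat.lt_or_ge k j with h | h
    · have h0 : k - j = 0 := by omega
      rw [h0]
      unfold uaNu
      rw [if_pos rfl]
      positivity
    · calc uaNu (k-j) ≤ (2⁻¹:ℝ)^(k-j) := uaNu_le _
        _ = (2:ℝ)^j * (2⁻¹:ℝ)^k := by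
            have : (2⁻¹:ℝ)^(k-j) * (2⁻¹:ℝ)^j = (2⁻¹:ℝ)^k := by
              rw [← pow_add, Nat.sub_add_cancel h]
            have h2 : (2⁻¹:ℝ)^j ≠ 0 := by positivity
            rw [← this, mul_comm ((2⁻¹:ℝ)^(k-j)), ← mul_assoc, ← mul_pow]
            norm_num
  exact Summable.of_nonneg_of_le (fun k => uaNu_nonneg _) hle (half_summable.mul_left _)

lemma uaNu_shift_tsum (j : ℕ) : ∑' k, uaNu (k - j) = 1 := by
  have h := Summable.sum_add_tsum_nat_add (f := fun k => uaNu (k - j)) j (uaNu_shift_summable j)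
  have h1 : ∑ i ∈ range j, uaNu (i - j) = 0 := by
    apply Finset.sum_eq_zero
    intro i hi
    have : i - j = 0 := by have := Finset.mem_range.mp hi; omega
    rw [this]
    unfold uaNu
    rw [if_pos rfl]
  have h2 : (fun i => uaNu ((i + j) - j)) = uaNu := by
    funext i; congr 1; omega
  rw [h1, h2] at h
  rw [← h, uaNu_tsum]
  linarith [uaNu_tsum]




lemma notmem_range {n k : ℕ} (hk : k ∉ range (n+1)) : n < k := by
  rcases Nat.lt_or_ge k (n+1) with h|h
  · exact absurd (Finset.mem_range.mpr h) hk
  · omega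

lemma uaC_nonneg (n k : ℕ) : 0 ≤ uaC n k := uaQ_nonneg n n le_rfl k

lemma uaC_summable (n : ℕ) : Summable (uaC n) := by
  apply summable_of_ne_finset_zero (s := range (n+1))
  intro k hk
  exact uaQ_eq_zero n n k (notmem_range hk)

lemma uaC_tsum (n : ℕ) : ∑' k, uaC n k = 1 := by
  rw [tsum_eq_sum (s := range (n+1))]
  · exact uaQ_sum n n le_rfl
  · intro k hk
    exact uaQ_eq_zero n n k (notmem_range hk)

lemma uaE_nonneg (n k : ℕ) : 0 ≤ uaE n k := by
  apply Finset.sum_nonneg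
  intro j _
  exact mul_nonneg (uaC_nonneg n j) (uaNu_nonneg _)

lemma uaE_summable (n : ℕ) : Summable (uaE n) := by
  apply summable_sum
  intro j _
  exact (uaNu_shift_summable j).mul_left _

lemma uaE_tsum (n : ℕ) : ∑' k, uaE n k = 1 := by
  unfold uaE
  rw [Summable.tsum_finsetSum (fun j _ => (uaNu_shift_summable j).mul_left _)]
  have : ∀ j ∈ range (n+1), ∑' k, uaC n j * uaNu (k - j) = uaC n j := by
    intro j _
    rw [tsum_mul_left, uaNu_shift_tsum j, mul_one]
  rw [Finset.sum_congr rfl this]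
  have h := uaC_tsum n
  rw [tsum_eq_sum (s := range (n+1))] at h
  · exact h
  · intro k hk
    exact uaQ_eq_zero n n k (notmem_range hk)

/-- indicator tsum machinery -/
lemma ind_summable {f : ℕ → ℝ} (hf : Summable f) (h0 : ∀ k, 0 ≤ f k) (B : Set ℕ) :
    Summable (fun k => if k ∈ B then f k else 0) := by
  classical
  apply Summable.of_nonneg_of_le (fun k => by split <;> [exact h0 k; exact le_refl 0])
    (fun k => by split <;> [exact le_refl _; exact h0 k]) hf

lemma ind_tsum_mem_Icc {f : ℕ → ℝ} (hf : Summable f) (h0 : ∀ k, 0 ≤ f k) (B : Set ℕ) :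
    0 ≤ (∑' k, if k ∈ B then f k else 0) ∧ (∑' k, if k ∈ B then f k else 0) ≤ ∑' k, f k := by
  classical
  constructor
  · apply tsum_nonneg
    intro k; split <;> [exact h0 k; exact le_refl 0]
  · apply Summable.tsum_le_tsum _ (ind_summable hf h0 B) hf
    intro k; split <;> [exact le_refl _; exact h0 k]




lemma pure_bound (n : ℕ) (hn : 1 ≤ n) (B : Set ℕ) :
    |(∑ k ∈ (range (n+1)).filter (· ∈ B), uaT n k) - ge0ProbN (1/2) B| ≤ 1 / (n:ℝ) := by
  have hnR : (1:ℝ) ≤ (n:ℝ) := by exact_mod_cast hn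
  set g : ℕ → ℝ := fun k => (1 - 1/2:ℝ)^k * (1/2) with hg
  have hgsum : Summable g := by
    have : Summable (fun k : ℕ => (1 - 1/2:ℝ)^k) :=
      summable_geometric_of_lt_one (by norm_num) (by norm_num)
    exact this.mul_right _
  have hgnn : ∀ k, 0 ≤ g k := by intro k; rw [hg]; positivity
  -- the two tsums
  have hge0 : ge0ProbN (1/2) B = ∑' k, (if k ∈ B then g k else 0) := by
    unfold ge0ProbN
    apply tsum_congr
    intro k
    rw [Set.indicator_apply]
  have htB0 : ∀ k ∉ range (n+1), (if k ∈ B then uaT n k else 0) = 0 := by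
    intro k hk
    have : uaT n k = 0 := uaT_zero n k (by
      rcases Nat.lt_or_ge k (n+1) with h|h
      · exact absurd (Finset.mem_range.mpr h) hk
      · omega)
    split <;> simp [this]
  have htBsum : Summable (fun k => if k ∈ B then uaT n k else 0) :=
    summable_of_ne_finset_zero (s := range (n+1)) htB0
  have hsum_eq : ∑ k ∈ (range (n+1)).filter (· ∈ B), uaT n k
      = ∑' k, (if k ∈ B then uaT n k else 0) := by
    rw [tsum_eq_sum (s := range (n+1)) htB0, Finset.sum_filter]
  rw [hsum_eq, hge0]
  -- summabilities of the four indicator pieces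
  have hCs := ind_summable (uaC_summable n) (uaC_nonneg n) B
  have hNs := ind_summable uaNu_summable uaNu_nonneg B
  have hDs := ind_summable uaDel_summable uaDel_nonneg B
  have hEs := ind_summable (uaE_summable n) (uaE_nonneg n) B
  have hCb := ind_tsum_mem_Icc (uaC_summable n) (uaC_nonneg n) B
  have hNb := ind_tsum_mem_Icc uaNu_summable uaNu_nonneg B
  have hDb := ind_tsum_mem_Icc uaDel_summable uaDel_nonneg B
  have hEb := ind_tsum_mem_Icc (uaE_summable n) (uaE_nonneg n) B
  rw [uaC_tsum] at hCb
  rw [uaNu_tsum] at hNb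
  rw [uaDel_tsum] at hDb
  rw [uaE_tsum] at hEb
  -- difference of tsums
  rw [← Summable.tsum_sub htBsum (ind_summable hgsum hgnn B)]
  have hpt : ∀ k, (if k ∈ B then uaT n k else 0) - (if k ∈ B then g k else 0)
      = (1/(2*(n:ℝ))) * (((if k ∈ B then uaC n k else 0) + (if k ∈ B then uaNu k else 0))
          - ((if k ∈ B then uaDel k else 0) + (if k ∈ B then uaE n k else 0))) := by
    intro k
    by_cases hk : k ∈ B
    · simp only [if_pos hk]
      rw [hg]
      have := uaT_sub n hn k
      linarith [this]
    · simp only [if_neg hk]; ring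
  rw [tsum_congr hpt, tsum_mul_left]
  rw [Summable.tsum_sub (hCs.add hNs) (hDs.add hEs), Summable.tsum_add hCs hNs, Summable.tsum_add hDs hEs]
  have habs : |((∑' k, if k ∈ B then uaC n k else 0) + (∑' k, if k ∈ B then uaNu k else 0))
      - ((∑' k, if k ∈ B then uaDel k else 0) + (∑' k, if k ∈ B then uaE n k else 0))| ≤ 2 := by
    rw [abs_le]
    constructor <;> [nlinarith [hCb.1, hNb.1, hDb.2, hEb.2, hCb.2, hNb.2, hDb.1, hEb.1];
      nlinarith [hCb.1, hNb.1, hDb.2, hEb.2, hCb.2, hNb.2, hDb.1, hEb.1]]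
  rw [abs_mul]
  have h1 : |1/(2*(n:ℝ))| = 1/(2*(n:ℝ)) := by
    rw [abs_of_nonneg]; positivity
  rw [h1]
  calc 1/(2*(n:ℝ)) * |_| ≤ 1/(2*(n:ℝ)) * 2 := by
        apply mul_le_mul_of_nonneg_left habs (by positivity)
    _ = 1/(n:ℝ) := by field_simp
  

end UAaux

open UAaux


theorem uniform_attachment_in_degree
    {Ω : Type*} [MeasurableSpace Ω] (μ : Measure Ω) [IsProbabilityMeasure μ]
    (n : ℕ) (hn : 1 ≤ n)
    (X : ℕ → Ω → ℕ) (N : Ω → ℕ)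
    (hXmeas : ∀ i, Measurable (X i)) (hNmeas : Measurable N)
    -- `X i` is Bernoulli with success probability `1/(n - i + 1)` for `1 ≤ i ≤ n`
    (hXval : ∀ i ω, X i ω ≤ 1)
    (hXlaw : ∀ i : ℕ, 1 ≤ i → i ≤ n →
      (μ {ω | X i ω = 1}).toReal = 1 / ((n : ℝ) - i + 1))
    -- `N` is uniform on `{1, ..., n}`
    (hNval : ∀ ω, 1 ≤ N ω ∧ N ω ≤ n)
    (hNlaw : ∀ k : ℕ, 1 ≤ k → k ≤ n → (μ {ω | N ω = k}).toReal = 1 / (n : ℝ))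
    -- `N, X₁, X₂, ...` are jointly independent
    (hindep : iIndepFun
      (fun o : Option ℕ => Option.elim o N X) μ)
    (W : Ω → ℕ) (hW : ∀ ω, W ω = ∑ i ∈ Finset.Icc 1 (N ω), X i ω) :
    dTVGe0N μ W (1 / 2) ≤ 1 / (n : ℝ) := by
  have hnR : (1:ℝ) ≤ (n:ℝ) := by exact_mod_cast hn
  -- partial sums
  set S : ℕ → Ω → ℕ := fun m ω => ∑ i ∈ Finset.Icc 1 m, X i ω with hS
  have hSmeas : ∀ m, Measurable (S m) := fun m => Finset.measurable_sum _ (fun i _ => hXmeas i)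
  have hfmeas : ∀ o : Option ℕ, Measurable (Option.elim o N X) := by
    rintro (_ | i)
    · exact hNmeas
    · exact hXmeas i
  -- sums over finsets of the option-indexed family
  have hsum_image : ∀ m : ℕ,
      (∑ j ∈ (Finset.Icc 1 m).image some, (fun o : Option ℕ => Option.elim o N X) j) = S m := by
    intro m
    rw [Finset.sum_image (fun x _ y _ h => Option.some_injective _ h)]
    funext ω
    rw [hS]
    simp [Finset.sum_apply]
  -- independence of S m and N
  have indep1 : ∀ m : ℕ, IndepFun (S m) N μ := by
    intro m
    have h := hindep.indepFun_finsetSum_of_notMem hfmeas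
      (s := (Finset.Icc 1 m).image some) (i := (none : Option ℕ)) (by simp)
    rwa [hsum_image m] at h
  -- independence of S m and X (m+1)
  have indep2 : ∀ m : ℕ, IndepFun (S m) (X (m+1)) μ := by
    intro m
    have h := hindep.indepFun_finsetSum_of_notMem hfmeas
      (s := (Finset.Icc 1 m).image some) (i := some (m+1)) (by simp)
    rwa [hsum_image m] at h
  -- product rule for point events
  have hmul : ∀ (U V : Ω → ℕ), IndepFun U V μ → ∀ a b : ℕ,
      (μ (U ⁻¹' {a} ∩ V ⁻¹' {b})).toReal
        = (μ (U ⁻¹' {a})).toReal * (μ (V ⁻¹' {b})).toReal := by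
    intro U V h a b
    rw [h.measure_inter_preimage_eq_mul _ _ (measurableSet_singleton a)
      (measurableSet_singleton b), ENNReal.toReal_mul]
  -- Bernoulli laws
  have hX1 : ∀ i, 1 ≤ i → i ≤ n → (μ (X i ⁻¹' {1})).toReal = uaP n i := by
    intro i h1 h2
    have : X i ⁻¹' {1} = {ω | X i ω = 1} := by ext ω; simp
    rw [this, hXlaw i h1 h2, uaP]
  have hX0 : ∀ i, 1 ≤ i → i ≤ n → (μ (X i ⁻¹' {0})).toReal = 1 - uaP n i := by
    intro i h1 h2
    have hc : X i ⁻¹' {0} = (X i ⁻¹' {1})ᶜ := by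
      ext ω
      have := hXval i ω
      simp only [Set.mem_preimage, Set.mem_singleton_iff, Set.mem_compl_iff]
      omega
    rw [hc, prob_compl_eq_one_sub ((hXmeas i) (measurableSet_singleton 1))]
    rw [ENNReal.toReal_sub_of_le prob_le_one ENNReal.one_ne_top]
    rw [ENNReal.toReal_one, ← hX1 i h1 h2]
  -- law of partial sums
  have hQ : ∀ m, m ≤ n → ∀ k, (μ (S m ⁻¹' {k})).toReal = uaQ n m k := by
    intro m
    induction m with
    | zero =>
      intro _ k
      have h0 : ∀ ω, S 0 ω = 0 := by intro ω; rw [hS]; simp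
      by_cases hk : k = 0
      · subst hk
        have : S 0 ⁻¹' {0} = Set.univ := by
          ext ω; simp [h0 ω]
        rw [this]
        simp [uaQ]
      · have : S 0 ⁻¹' {k} = ∅ := by
          ext ω; simp [h0 ω]; omega
        rw [this, measure_empty]
        have h2 : uaQ n 0 k = 0 := by
          show (if k = 0 then (1:ℝ) else 0) = 0
          rw [if_neg hk]
        rw [h2]
        simp
    | succ m ih =>
      intro h k
      have hm : m ≤ n := Nat.le_of_succ_le h
      have h1m : (1:ℕ) ≤ m + 1 := by omega
      have hstep : ∀ ω, S (m+1) ω = S m ω + X (m+1) ω := by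
        intro ω
        rw [hS]
        exact Finset.sum_Icc_succ_top h1m _
      have hp := hX1 (m+1) h1m h
      have hq := hX0 (m+1) h1m h
      rcases Nat.eq_zero_or_pos k with hk | hk
      · subst hk
        have hpart : S (m+1) ⁻¹' {0} = S m ⁻¹' {0} ∩ X (m+1) ⁻¹' {0} := by
          ext ω
          simp only [Set.mem_preimage, Set.mem_singleton_iff, Set.mem_inter_iff, hstep ω]
          omega
        rw [hpart, hmul _ _ (indep2 m) 0 0, ih hm 0, hq]
        show _ = (1 - uaP n (m + 1)) * uaQ n m 0 +
          uaP n (m + 1) * (if (0:ℕ) = 0 then (0:ℝ) else uaQ n m (0 - 1))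
        rw [if_pos rfl]
        ring
      · obtain ⟨j, rfl⟩ : ∃ j, k = j + 1 := ⟨k - 1, by omega⟩
        have hpart : S (m+1) ⁻¹' {j+1}
            = (S m ⁻¹' {j+1} ∩ X (m+1) ⁻¹' {0}) ∪ (S m ⁻¹' {j} ∩ X (m+1) ⁻¹' {1}) := by
          ext ω
          have hx := hXval (m+1) ω
          simp only [Set.mem_preimage, Set.mem_singleton_iff, Set.mem_union,
            Set.mem_inter_iff, hstep ω]
          omega
        have hdisj : Disjoint (S m ⁻¹' {j+1} ∩ X (m+1) ⁻¹' {0})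
            (S m ⁻¹' {j} ∩ X (m+1) ⁻¹' {1}) := by
          rw [Set.disjoint_left]
          rintro ω ⟨_, h0⟩ ⟨_, h1⟩
          simp only [Set.mem_preimage, Set.mem_singleton_iff] at h0 h1
          omega
        have hmeas2 : MeasurableSet (S m ⁻¹' {j} ∩ X (m+1) ⁻¹' {1}) :=
          ((hSmeas m) (measurableSet_singleton j)).inter
            ((hXmeas (m+1)) (measurableSet_singleton 1))
        rw [hpart, measure_union hdisj hmeas2,
          ENNReal.toReal_add (measure_ne_top μ _) (measure_ne_top μ _),
          hmul _ _ (indep2 m) (j+1) 0, hmul _ _ (indep2 m) j 1,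
          ih hm (j+1), ih hm j, hp, hq]
        show _ = (1 - uaP n (m + 1)) * uaQ n m (j+1) +
          uaP n (m + 1) * (if j + 1 = 0 then (0:ℝ) else uaQ n m (j + 1 - 1))
        rw [if_neg (by omega)]
        simp only [Nat.add_sub_cancel]
        ring
  -- joint law
  have hNset : ∀ m : ℕ, N ⁻¹' {m} = {ω | N ω = m} := by intro m; ext ω; simp
  have hjoint : ∀ m k, 1 ≤ m → m ≤ n →
      (μ (N ⁻¹' {m} ∩ S m ⁻¹' {k})).toReal = (1/(n:ℝ)) * uaQ n m k := by
    intro m k h1 h2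
    rw [hmul _ _ (indep1 m).symm m k, hQ m h2 k, hNset m, hNlaw m h1 h2]
  -- bound on S
  have hSle : ∀ m ω, S m ω ≤ m := by
    intro m ω
    rw [hS]
    calc ∑ i ∈ Finset.Icc 1 m, X i ω ≤ ∑ i ∈ Finset.Icc 1 m, 1 :=
          Finset.sum_le_sum (fun i _ => hXval i ω)
      _ = m := by rw [Finset.sum_const, Nat.card_Icc]; simp
  -- decomposition of the event {W ∈ B}
  apply Real.iSup_le _ (by positivity)
  intro B
  set PB := (Finset.Icc 1 n) ×ˢ ((Finset.range (n+1)).filter (· ∈ B)) with hPB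
  have hset : {ω | W ω ∈ B} = ⋃ p ∈ PB, (N ⁻¹' {p.1} ∩ S p.1 ⁻¹' {p.2}) := by
    ext ω
    simp only [Set.mem_setOf_eq, Set.mem_iUnion, Set.mem_inter_iff, Set.mem_preimage,
      Set.mem_singleton_iff]
    constructor
    · intro hB
      refine ⟨(N ω, S (N ω) ω), ?_, rfl, rfl⟩
      rw [hPB, Finset.mem_product]
      constructor
      · rw [Finset.mem_Icc]
        exact ⟨(hNval ω).1, (hNval ω).2⟩
      · rw [Finset.mem_filter, Finset.mem_range]
        refine ⟨by have := hSle (N ω) ω; have := (hNval ω).2; omega, ?_⟩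
        show S (N ω) ω ∈ B
        have hWS : W ω = S (N ω) ω := hW ω
        rw [← hWS]
        exact hB
    · rintro ⟨p, hp, hN, hSp⟩
      rw [hPB, Finset.mem_product, Finset.mem_filter] at hp
      have : W ω = p.2 := by rw [hW ω, ← hSp, ← hN]
      rw [this]
      exact hp.2.2
  have hdisjPB : (PB : Set (ℕ × ℕ)).PairwiseDisjoint
      (fun p : ℕ × ℕ => N ⁻¹' {p.1} ∩ S p.1 ⁻¹' {p.2}) := by
    intro p _ q _ hpq
    rw [Function.onFun, Set.disjoint_left]
    rintro ω ⟨hN1, hS1⟩ ⟨hN2, hS2⟩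
    simp only [Set.mem_preimage, Set.mem_singleton_iff] at hN1 hS1 hN2 hS2
    apply hpq
    have h1 : p.1 = q.1 := by omega
    have h2 : p.2 = q.2 := by rw [← hS1, ← hS2, h1]
    exact Prod.ext h1 h2
  have hmeasPB : ∀ p ∈ PB, MeasurableSet (N ⁻¹' {p.1} ∩ S p.1 ⁻¹' {p.2}) := by
    intro p _
    exact (hNmeas (measurableSet_singleton p.1)).inter
      ((hSmeas p.1) (measurableSet_singleton p.2))
  have hmeasure : (μ {ω | W ω ∈ B}).toReal
      = ∑ p ∈ PB, (μ (N ⁻¹' {p.1} ∩ S p.1 ⁻¹' {p.2})).toReal := by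
    rw [hset, measure_biUnion_finset hdisjPB hmeasPB]
    exact ENNReal.toReal_sum (fun p _ => measure_ne_top μ _)
  have hval : ∑ p ∈ PB, (μ (N ⁻¹' {p.1} ∩ S p.1 ⁻¹' {p.2})).toReal
      = ∑ k ∈ (range (n+1)).filter (· ∈ B), uaT n k := by
    rw [hPB, Finset.sum_product]
    have hinner : ∀ m ∈ Finset.Icc 1 n, ∀ k ∈ (Finset.range (n+1)).filter (· ∈ B),
        (μ (N ⁻¹' {m} ∩ S m ⁻¹' {k})).toReal = (1/(n:ℝ)) * uaQ n m k := by
      intro m hm k _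
      rw [Finset.mem_Icc] at hm
      exact hjoint m k hm.1 hm.2
    rw [Finset.sum_congr rfl (fun m hm => Finset.sum_congr rfl (fun k hk => hinner m hm k hk))]
    rw [Finset.sum_comm]
    apply Finset.sum_congr rfl
    intro k _
    rw [← Finset.mul_sum, uaT]
    congr 1
    -- ∑ m ∈ Icc 1 n, uaQ n m k = (∑ m ∈ range n, uaQ n m k) + uaQ n n k - uaDel k
    have hIcc : ∑ m ∈ Finset.Icc 1 n, uaQ n m k
        = ∑ i ∈ Finset.range n, uaQ n (1+i) k := by
      have : Finset.Icc 1 n = Finset.Ico 1 (n+1) := by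
        rw [Finset.Ico_add_one_right_eq_Icc]
      rw [this, Finset.sum_Ico_eq_sum_range]
      simp
    have hrange : ∑ m ∈ Finset.range (n+1), uaQ n m k
        = (∑ m ∈ Finset.range n, uaQ n m k) + uaQ n n k := Finset.sum_range_succ _ _
    have hrange' : ∑ m ∈ Finset.range (n+1), uaQ n m k
        = (∑ i ∈ Finset.range n, uaQ n (1+i) k) + uaQ n 0 k := by
      rw [Finset.sum_range_succ' (fun m => uaQ n m k) n]
      apply congrArg (· + uaQ n 0 k)
      apply Finset.sum_congr rfl
      intro i _
      rw [Nat.add_comm 1 i]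
    have hQ0 : uaQ n 0 k = uaDel k := rfl
    have hCq : uaC n k = uaQ n n k := rfl
    rw [hIcc]
    rw [← hQ0]
    rw [hCq]
    linarith [hrange, hrange']
  rw [hmeasure, hval]
  exact pure_bound n hn B
end
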